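/- arXiv:1905.09516 — 3 statements merged into one kernel-verified Lean document; each statement's English description precedes it below -/
import Mathlib

section
/- Let p be a prime, let n₁, n₂, n₃ be natural numbers, and let F be a finite abelian p-group, and let G = ℤ_p^{n₁} × ℚ_p^{n₂} × (ℚ_p/ℤ_p)^{n₃} × F (with the product topology, where the Prüfer group ℚ_p/ℤ_p carries the quotient topology, which is discrete, and F is discrete). Then every continuous endomorphism of G has zero topological entropy if and only if n₂ = 0. -/
open MeasureTheory Filter Topology Pointwise
open scoped ENNReal NNReal Classical

set_option linter.unusedVariables false
set_option linter.unusedSectionVars false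

/-- The `n`-th `φ`-cotrajectory of `U`: `U ∩ φ⁻¹(U) ∩ … ∩ φ⁻⁽ⁿ⁻¹⁾(U)`. -/
def cotraj {G : Type*} (φ : G → G) (U : Set G) (n : ℕ) : Set G :=
  ⋂ k ∈ Finset.range n, (φ^[k]) ⁻¹' U

/-- Topological entropy of a (continuous) endomorphism of a locally compact Hausdorff
additive topological group, computed with respect to Haar measure:
`h_top(φ) = sup_U limsup_n (−log μ(C_n(φ,U)))/n`, the supremum over all compact
neighborhoods `U` of `0`. -/
noncomputable def addHtop {G : Type*} [AddGroup G] [TopologicalSpace G] (φ : G → G) : ℝ≥0∞ :=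
  letI : MeasurableSpace G := borel G
  haveI : BorelSpace G := ⟨rfl⟩
  if h : IsTopologicalAddGroup G ∧ T2Space G ∧ LocallyCompactSpace G then
    haveI := h.1
    haveI := h.2.1
    haveI := h.2.2
    ⨆ U ∈ {U : Set G | IsCompact U ∧ U ∈ 𝓝 (0 : G)},
      Filter.atTop.limsup fun n : ℕ =>
        ENNReal.ofReal
          ((-Real.log ((MeasureTheory.Measure.addHaar (cotraj φ U n)).toReal)) / n)
  else 0

/-- The Prüfer group `ℚ_p/ℤ_p`, with the quotient topology. -/
abbrev PadicPrufer (p : ℕ) [Fact p.Prime] :=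
  ℚ_[p] ⧸ (PadicInt.subring p).toAddSubgroup

/-- The locally compact abelian `p`-group `ℤ_p^{n₁} × ℚ_p^{n₂} × (ℚ_p/ℤ_p)^{n₃} × F`,
with the product topology. -/
abbrev PadicLCA (p : ℕ) [Fact p.Prime] (n₁ n₂ n₃ : ℕ) (F : Type*) :=
  (Fin n₁ → ℤ_[p]) × (Fin n₂ → ℚ_[p]) × (Fin n₃ → PadicPrufer p) × F

instance discreteTopologicalAddGroup {F : Type*} [AddGroup F] [TopologicalSpace F]
    [DiscreteTopology F] : IsTopologicalAddGroup F := ⟨⟩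

lemma limsup_term_zero {G : Type*} [AddGroup G] [TopologicalSpace G]
    [IsTopologicalAddGroup G] [T2Space G] [LocallyCompactSpace G]
    [MeasurableSpace G] [BorelSpace G]
    (φ : G → G) (U : Set G) (hUc : IsCompact U) (hUn : U ∈ 𝓝 (0 : G))
    (h : ∃ V ∈ 𝓝 (0:G), ∀ k, ∀ x ∈ V, φ^[k] x ∈ U) :
    (Filter.atTop.limsup fun n : ℕ =>
        ENNReal.ofReal
          ((-Real.log ((MeasureTheory.Measure.addHaar (cotraj φ U n)).toReal)) / n)) = 0 := by
  obtain ⟨V, hV0, hVinv⟩ := h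
  set μ : Measure G := Measure.addHaar with hμ
  have hcsub : ∀ n : ℕ, 1 ≤ n → cotraj φ U n ⊆ U := by
    intro n hn x hx
    have := Set.mem_iInter.1 (Set.mem_iInter.1 hx 0) (Finset.mem_range.2 hn)
    simpa using this
  have hVsub : ∀ n, V ⊆ cotraj φ U n := by
    intro n x hx
    simp only [cotraj, Set.mem_iInter, Finset.mem_range]
    intro k _
    exact hVinv k x hx
  have hVU : V ⊆ U := fun x hx => hVinv 0 x hx
  have hμV : 0 < μ V := μ.measure_pos_of_mem_nhds hV0
  have hμU : μ U ≠ ∞ := hUc.measure_lt_top.ne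
  have hv : 0 < (μ V).toReal :=
    ENNReal.toReal_pos hμV.ne' (ne_top_of_le_ne_top hμU (measure_mono hVU))
  set L : ℝ := |Real.log ((μ V).toReal)|
  have key : ∀ n : ℕ, 1 ≤ n →
      ENNReal.ofReal ((-Real.log ((μ (cotraj φ U n)).toReal)) / n)
        ≤ ENNReal.ofReal (L / n) := by
    intro n hn
    apply ENNReal.ofReal_le_ofReal
    apply div_le_div_of_nonneg_right _ (by positivity : (0:ℝ) ≤ n)
    calc -Real.log ((μ (cotraj φ U n)).toReal)
        ≤ -Real.log ((μ V).toReal) := by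
          apply neg_le_neg
          apply Real.log_le_log hv
          exact ENNReal.toReal_mono
            (ne_top_of_le_ne_top hμU (measure_mono (hcsub n hn)))
            (measure_mono (hVsub n))
      _ ≤ L := neg_le_abs _
  have hbound : Filter.Tendsto (fun n : ℕ => ENNReal.ofReal (L / n)) Filter.atTop (𝓝 0) := by
    have := ENNReal.tendsto_ofReal (tendsto_const_div_atTop_nhds_zero_nat L)
    simpa using this
  have h1 : (Filter.atTop.limsup fun n : ℕ =>
      ENNReal.ofReal ((-Real.log ((μ (cotraj φ U n)).toReal)) / n))
      ≤ Filter.atTop.limsup (fun n : ℕ => ENNReal.ofReal (L / n)) := by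
    apply limsup_le_limsup _ isCobounded_le_of_bot isBounded_le_of_top
    filter_upwards [Filter.eventually_ge_atTop 1] with n hn
    exact key n hn
  rw [hbound.limsup_eq] at h1
  exact le_antisymm h1 zero_le

lemma addHtop_eq_zero_of_invariant {G : Type*} [AddGroup G] [TopologicalSpace G]
    [h1 : IsTopologicalAddGroup G] [h2 : T2Space G] [h3 : LocallyCompactSpace G]
    (φ : G → G)
    (h : ∀ U : Set G, IsCompact U → U ∈ 𝓝 (0:G) →
      ∃ V ∈ 𝓝 (0:G), ∀ k, ∀ x ∈ V, φ^[k] x ∈ U) :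
    addHtop φ = 0 := by
  rw [addHtop]
  simp only [dif_pos (⟨h1, h2, h3⟩ : IsTopologicalAddGroup G ∧ T2Space G ∧ LocallyCompactSpace G)]
  letI : MeasurableSpace G := borel G
  haveI : BorelSpace G := ⟨rfl⟩
  rw [ENNReal.iSup_eq_zero]
  intro U
  rw [ENNReal.iSup_eq_zero]
  rintro ⟨hUc, hUn⟩
  exact limsup_term_zero φ U hUc hUn (h U hUc hUn)

lemma le_addHtop {G : Type*} [AddGroup G] [TopologicalSpace G]
    [h1 : IsTopologicalAddGroup G] [h2 : T2Space G] [h3 : LocallyCompactSpace G]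
    (φ : G → G) (U : Set G) (hUc : IsCompact U) (hUn : U ∈ 𝓝 (0:G)) :
    (letI : MeasurableSpace G := borel G
     haveI : BorelSpace G := ⟨rfl⟩
     Filter.atTop.limsup fun n : ℕ =>
        ENNReal.ofReal
          ((-Real.log ((MeasureTheory.Measure.addHaar (cotraj φ U n)).toReal)) / n))
      ≤ addHtop φ := by
  rw [addHtop]
  simp only [dif_pos (⟨h1, h2, h3⟩ : IsTopologicalAddGroup G ∧ T2Space G ∧ LocallyCompactSpace G)]
  letI : MeasurableSpace G := borel G
  haveI : BorelSpace G := ⟨rfl⟩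
  exact le_iSup₂ (f := fun U _ => Filter.atTop.limsup fun n : ℕ =>
        ENNReal.ofReal
          ((-Real.log ((MeasureTheory.Measure.addHaar (cotraj φ U n)).toReal)) / n))
    U ⟨hUc, hUn⟩

section Prufer
variable (p : ℕ) [Fact p.Prime]

theorem prufer_isOpen_subgroup : IsOpen ((PadicInt.subring p).toAddSubgroup : Set ℚ_[p]) := by
  have : ((PadicInt.subring p).toAddSubgroup : Set ℚ_[p]) = {x : ℚ_[p] | ‖x‖ < (p:ℝ)^(0+1:ℤ)} := by
    ext x
    simp only [Set.mem_setOf_eq]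
    constructor
    · intro hx; rw [← Padic.norm_le_pow_iff_norm_lt_pow_add_one]; simpa using hx
    · intro hx; rw [← Padic.norm_le_pow_iff_norm_lt_pow_add_one] at hx; simpa using hx
  rw [this]
  exact isOpen_lt (continuous_norm) continuous_const

instance : DiscreteTopology (PadicPrufer p) := by
  rw [discreteTopology_iff_isOpen_singleton_zero]
  have h := (QuotientAddGroup.isOpenMap_coe (N := (PadicInt.subring p).toAddSubgroup))
      _ (prufer_isOpen_subgroup p)
  have himg : ((QuotientAddGroup.mk : ℚ_[p] → PadicPrufer p) ''
      ((PadicInt.subring p).toAddSubgroup : Set ℚ_[p])) = {0} := by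
    ext y
    simp only [Set.mem_image, Set.mem_singleton_iff]
    constructor
    · rintro ⟨x, hx, rfl⟩
      exact (QuotientAddGroup.eq_zero_iff x).2 hx
    · rintro rfl
      exact ⟨0, zero_mem _, rfl⟩
  rwa [himg] at h

example : T2Space (PadicPrufer p) := inferInstance
example : LocallyCompactSpace (PadicPrufer p) := inferInstance

theorem prufer_torsion (y : PadicPrufer p) : ∃ k : ℕ, p ^ k • y = 0 := by
  obtain ⟨x, rfl⟩ := QuotientAddGroup.mk_surjective y
  obtain ⟨k, hk⟩ := pow_unbounded_of_one_lt (‖x‖) (by exact_mod_cast (Fact.out : p.Prime).one_lt : (1:ℝ) < p)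
  refine ⟨k, ?_⟩
  rw [← QuotientAddGroup.mk_nsmul]
  apply (QuotientAddGroup.eq_zero_iff _).2
  show ((p ^ k • x : ℚ_[p])) ∈ PadicInt.subring p
  have : ‖(p:ℚ_[p])^k * x‖ ≤ 1 := by
    rw [norm_mul, Padic.norm_p_pow]
    have hp0 : (0:ℝ) < (p:ℝ)^(k:ℤ) := by
      apply zpow_pos
      exact_mod_cast (Fact.out : p.Prime).pos
    rw [zpow_neg, inv_mul_le_iff₀ hp0, mul_one, zpow_natCast]
    exact_mod_cast hk.le
  simpa [nsmul_eq_mul] using this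

end Prufer

section Digit
variable (p : ℕ) [Fact p.Prime]

lemma qp_exists_digit (m : ℕ) (z : ℚ_[p]) (hz : ‖z‖ ≤ (p:ℝ)^(-(m:ℤ))) :
    ∃ r : Fin p, ‖z - (p:ℚ_[p])^m * ((r:ℕ):ℚ_[p])‖ ≤ (p:ℝ)^(-(m+1:ℤ)) := by
  have hp0 : (p:ℚ_[p]) ≠ 0 := Nat.cast_ne_zero.2 (Fact.out : p.Prime).ne_zero
  have hpm0 : (p:ℚ_[p])^m ≠ 0 := pow_ne_zero _ hp0
  have hpRpos : ∀ k : ℤ, (0:ℝ) < (p:ℝ)^k := fun k =>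
    zpow_pos (by exact_mod_cast (Fact.out : p.Prime).pos) _
  set w : ℚ_[p] := z / (p:ℚ_[p])^m with hwdef
  have hw : ‖w‖ ≤ 1 := by
    rw [hwdef, norm_div, Padic.norm_p_pow, div_le_one (hpRpos _)]
    simpa using hz
  set w' : ℤ_[p] := ⟨w, hw⟩ with hw'def
  have hr0 : w'.appr 1 < p := by simpa using w'.appr_lt 1
  refine ⟨⟨w'.appr 1, hr0⟩, ?_⟩
  have hspec : w' - ((w'.appr 1 : ℕ) : ℤ_[p]) ∈ Ideal.span {(p:ℤ_[p])^1} := w'.appr_spec 1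
  have hnorm : ‖w' - ((w'.appr 1 : ℕ) : ℤ_[p])‖ ≤ (p:ℝ)^(-(1:ℕ):ℤ) :=
    (PadicInt.norm_le_pow_iff_mem_span_pow _ 1).2 hspec
  have hnormQ : ‖w - ((w'.appr 1 : ℕ) : ℚ_[p])‖ ≤ (p:ℝ)^(-(1:ℤ)) := by
    have : ((w' - ((w'.appr 1 : ℕ) : ℤ_[p]) : ℤ_[p]) : ℚ_[p])
        = w - ((w'.appr 1 : ℕ) : ℚ_[p]) := by push_cast [hw'def]; rfl
    rw [← this]
    simpa [PadicInt.norm_def] using hnorm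
  have hz' : z = (p:ℚ_[p])^m * w := by rw [hwdef, mul_div_cancel₀ _ hpm0]
  calc ‖z - (p:ℚ_[p])^m * ((w'.appr 1 : ℕ) : ℚ_[p])‖
      = ‖(p:ℚ_[p])^m * (w - ((w'.appr 1 : ℕ) : ℚ_[p]))‖ := by rw [hz', mul_sub]
    _ = (p:ℝ)^(-(m:ℤ)) * ‖w - ((w'.appr 1 : ℕ) : ℚ_[p])‖ := by
        rw [norm_mul, Padic.norm_p_pow]
    _ ≤ (p:ℝ)^(-(m:ℤ)) * (p:ℝ)^(-(1:ℤ)) :=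
        mul_le_mul_of_nonneg_left hnormQ (hpRpos _).le
    _ = (p:ℝ)^(-(m+1:ℤ)) := by
        rw [← zpow_add₀ (by exact_mod_cast (Fact.out : p.Prime).ne_zero : (p:ℝ) ≠ 0)]
        ring_nf

lemma qp_digit_unique (m : ℕ) (z : ℚ_[p]) (r r' : Fin p)
    (h : ‖z - (p:ℚ_[p])^m * ((r:ℕ):ℚ_[p])‖ ≤ (p:ℝ)^(-(m+1:ℤ)))
    (h' : ‖z - (p:ℚ_[p])^m * ((r':ℕ):ℚ_[p])‖ ≤ (p:ℝ)^(-(m+1:ℤ))) : r = r' := by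
  have hp0 : (p:ℝ) ≠ 0 := by exact_mod_cast (Fact.out : p.Prime).ne_zero
  have hdiff : ‖(p:ℚ_[p])^m * (((r:ℕ):ℚ_[p]) - ((r':ℕ):ℚ_[p]))‖ ≤ (p:ℝ)^(-(m+1:ℤ)) := by
    have e : (p:ℚ_[p])^m * (((r:ℕ):ℚ_[p]) - ((r':ℕ):ℚ_[p]))
        = (z - (p:ℚ_[p])^m * ((r':ℕ):ℚ_[p])) - (z - (p:ℚ_[p])^m * ((r:ℕ):ℚ_[p])) := by ring
    rw [e]
    rw [sub_eq_add_neg]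
    calc ‖(z - (p:ℚ_[p])^m * ((r':ℕ):ℚ_[p])) + -(z - (p:ℚ_[p])^m * ((r:ℕ):ℚ_[p]))‖
        ≤ max ‖z - (p:ℚ_[p])^m * ((r':ℕ):ℚ_[p])‖ ‖-(z - (p:ℚ_[p])^m * ((r:ℕ):ℚ_[p]))‖ :=
          Padic.nonarchimedean _ _
      _ ≤ (p:ℝ)^(-(m+1:ℤ)) := max_le h' (by rwa [norm_neg])
  have hsmall : ‖((r:ℕ):ℚ_[p]) - ((r':ℕ):ℚ_[p])‖ < 1 := by
    rw [norm_mul, Padic.norm_p_pow] at hdiff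
    have hpm : (0:ℝ) < (p:ℝ)^(-(m:ℤ)) := zpow_pos (by exact_mod_cast (Fact.out : p.Prime).pos) _
    have : ‖((r:ℕ):ℚ_[p]) - ((r':ℕ):ℚ_[p])‖ ≤ (p:ℝ)^(-(1:ℤ)) := by
      have e2 : (p:ℝ)^(-(m+1:ℤ)) = (p:ℝ)^(-(m:ℤ)) * (p:ℝ)^(-(1:ℤ)) := by
        rw [← zpow_add₀ hp0]; ring_nf
      rw [e2] at hdiff
      exact le_of_mul_le_mul_left hdiff hpm
    apply lt_of_le_of_lt this
    rw [zpow_neg, zpow_one, inv_lt_one_iff₀]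
    right
    exact_mod_cast (Fact.out : p.Prime).one_lt
  have hdvd : (p:ℤ) ∣ ((r:ℕ) : ℤ) - ((r':ℕ) : ℤ) := by
    rw [← Padic.norm_intCast_lt_one_iff]
    push_cast
    exact_mod_cast hsmall
  have h1 : ((r:ℕ) : ℤ) < p := by exact_mod_cast r.2
  have h2 : ((r':ℕ) : ℤ) < p := by exact_mod_cast r'.2
  by_contra hne
  have hd : ((r:ℕ) : ℤ) - ((r':ℕ) : ℤ) ≠ 0 := by
    intro h0
    exact hne (Fin.ext (by omega))
  have hle : (p:ℤ) ≤ |((r:ℕ) : ℤ) - ((r':ℕ) : ℤ)| :=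
    Int.le_of_dvd (abs_pos.2 hd) ((dvd_abs _ _).2 hdvd)
  have hlt : |((r:ℕ) : ℤ) - ((r':ℕ) : ℤ)| < p := abs_lt.2 ⟨by omega, by omega⟩
  omega

end Digit

lemma nsmul_kill {M : Type*} [AddMonoid M] {p : ℕ} {z : M} {k K : ℕ}
    (h : p ^ k • z = 0) (hkK : k ≤ K) : p ^ K • z = 0 := by
  obtain ⟨d, rfl⟩ := Nat.exists_eq_add_of_le hkK
  rw [pow_add, mul_nsmul, h, smul_zero]

section ZeroDir
variable (p : ℕ) [Fact p.Prime] (n₁ n₃ : ℕ)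
  (F : Type*) [AddCommGroup F] [Fintype F] [TopologicalSpace F] [DiscreteTopology F]

abbrev Gz := (Fin n₁ → ℤ_[p]) × (Fin 0 → ℚ_[p]) × (Fin n₃ → PadicPrufer p) × F

lemma invariant_nbhd (hF : ∀ x : F, ∃ k : ℕ, p ^ k • x = 0)
    (φ : Gz p n₁ n₃ F →+ Gz p n₁ n₃ F) (hφ : Continuous φ)
    (U : Set (Gz p n₁ n₃ F)) (hUn : U ∈ 𝓝 0) :
    ∃ V ∈ 𝓝 (0 : Gz p n₁ n₃ F), ∀ k, ∀ x ∈ V, φ^[k] x ∈ U := by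
  classical
  set K := (Fin n₁ → ℤ_[p]) with hK
  set Q0 := (Fin 0 → ℚ_[p]) with hQ0
  set D := ((Fin n₃ → PadicPrufer p) × F) with hD
  set ι : K →+ Gz p n₁ n₃ F := (AddMonoidHom.id K).prod 0 with hι
  set A : K →+ K := (AddMonoidHom.fst K (Q0 × D)).comp (φ.comp ι) with hA
  set ψ : K →+ D := (AddMonoidHom.snd Q0 D).comp
      ((AddMonoidHom.snd K (Q0 × D)).comp (φ.comp ι)) with hψ
  have hιc : Continuous ι := continuous_id.prodMk continuous_const
  have hψc : Continuous ψ := continuous_snd.comp (continuous_snd.comp (hφ.comp hιc))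
  have htor : ∀ z : D, ∃ k : ℕ, p ^ k • z = 0 := by
    rintro ⟨z₁, z₂⟩
    obtain ⟨k₂, hk₂⟩ := hF z₂
    choose κ hκ using fun j => prufer_torsion p (z₁ j)
    refine ⟨Finset.univ.sup κ + k₂, ?_⟩
    have h1 : p ^ (Finset.univ.sup κ + k₂) • z₁ = 0 := by
      funext j
      have : p ^ (Finset.univ.sup κ + k₂) • z₁ j = 0 :=
        nsmul_kill (hκ j) (le_trans (Finset.le_sup (Finset.mem_univ j)) (Nat.le_add_right _ _))
      simpa using this
    have h2 : p ^ (Finset.univ.sup κ + k₂) • z₂ = 0 :=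
      nsmul_kill hk₂ (Nat.le_add_left _ _)
    have : p ^ (Finset.univ.sup κ + k₂) • ((z₁, z₂) : D) =
        (p ^ (Finset.univ.sup κ + k₂) • z₁, p ^ (Finset.univ.sup κ + k₂) • z₂) := rfl
    rw [this, h1, h2]
    rfl
  have hS : (Set.range ψ).Finite := (isCompact_range hψc).finite (IsDiscrete.univ.mono (Set.subset_univ _))
  choose κD hκD using htor
  set t : ℕ := hS.toFinset.sup κD with ht
  have hψkill : ∀ a : K, p ^ t • ψ a = 0 := fun a =>
    nsmul_kill (hκD (ψ a)) (Finset.le_sup (hS.mem_toFinset.2 ⟨a, rfl⟩))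
  set B : ℕ → Set K := fun m => Set.univ.pi fun _ => Metric.closedBall (0 : ℤ_[p]) ((p:ℝ)^(-(m:ℤ)))
    with hB
  set W : ℕ → Set (Gz p n₁ n₃ F) := fun m => B m ×ˢ (Set.univ ×ˢ ({0} : Set D)) with hW
  have hpR : (1:ℝ) < p := by exact_mod_cast (Fact.out : p.Prime).one_lt
  have hppos : ∀ m : ℕ, (0:ℝ) < (p:ℝ)^(-(m:ℤ)) := fun m => zpow_pos (by linarith) _
  have hmemW : ∀ m (x : Gz p n₁ n₃ F),
      x ∈ W m ↔ (∀ i, ‖x.1 i‖ ≤ (p:ℝ)^(-(m:ℤ))) ∧ x.2.2 = 0 := by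
    intro m x
    constructor
    · rintro ⟨h1, -, h3⟩
      exact ⟨fun i => by simpa using mem_closedBall_zero_iff.1 (h1 i (Set.mem_univ i)), h3⟩
    · rintro ⟨h1, h2⟩
      exact ⟨fun i _ => mem_closedBall_zero_iff.2 (h1 i), Set.mem_univ _, h2⟩
  have hWnhds : ∀ m, W m ∈ 𝓝 (0 : Gz p n₁ n₃ F) := by
    intro m
    apply prod_mem_nhds
    · exact set_pi_mem_nhds Set.finite_univ fun i _ =>
        Metric.closedBall_mem_nhds 0 (hppos m)
    · exact prod_mem_nhds Filter.univ_mem ((isOpen_discrete _).mem_nhds rfl)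
  have hWmono : ∀ {m m' : ℕ}, m ≤ m' → W m' ⊆ W m := by
    intro m m' h x hx
    rw [hmemW] at hx ⊢
    refine ⟨fun i => le_trans (hx.1 i) ?_, hx.2⟩
    apply zpow_le_zpow_right₀ hpR.le
    omega
  have hWsub : ∃ m, W m ⊆ U := by
    rw [mem_nhds_prod_iff] at hUn
    obtain ⟨t₁, ht₁, s, hs, hsub⟩ := hUn
    rw [mem_nhds_prod_iff] at hs
    obtain ⟨t₂, ht₂, s', hs', hsub'⟩ := hs
    obtain ⟨ε, hε, hball⟩ := Metric.mem_nhds_iff.1 ht₁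
    obtain ⟨m, hm⟩ := exists_pow_lt_of_lt_one hε
      (by rw [inv_lt_one_iff₀]; right; exact hpR : (p:ℝ)⁻¹ < 1)
    have hmε : (p:ℝ)^(-(m:ℤ)) < ε := by
      rw [zpow_neg, zpow_natCast, ← inv_pow]
      exact hm
    refine ⟨m, ?_⟩
    intro x hx
    rw [hmemW] at hx
    apply hsub
    refine ⟨hball ?_, hsub' ⟨?_, ?_⟩⟩
    · rw [Metric.mem_ball, dist_pi_lt_iff hε]
      intro i
      calc dist (x.1 i) 0 = ‖x.1 i‖ := by simp
        _ ≤ (p:ℝ)^(-(m:ℤ)) := hx.1 i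
        _ < ε := hmε
    · have : x.2.1 = 0 := Subsingleton.elim _ _
      rw [this]
      exact mem_of_mem_nhds ht₂
    · rw [hx.2]
      exact mem_of_mem_nhds hs'
  have hinv : ∀ m, t ≤ m → ∀ x ∈ W m, φ x ∈ W m := by
    intro m hm x hx
    rw [hmemW] at hx ⊢
    obtain ⟨hx1, hx2⟩ := hx
    have hxeq : x = ι x.1 := by
      refine Prod.ext rfl (Prod.ext (Subsingleton.elim _ _) ?_)
      rw [hx2]
      rfl
    have hdvd : ∀ i, ∃ z : ℤ_[p], x.1 i = (p:ℤ_[p])^m * z := by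
      intro i
      have h := (PadicInt.norm_le_pow_iff_mem_span_pow (x.1 i) m).1 (hx1 i)
      rw [Ideal.mem_span_singleton] at h
      obtain ⟨z, hz⟩ := h
      exact ⟨z, hz⟩
    choose y hy using hdvd
    have hxy : x.1 = (p ^ m : ℕ) • y := by
      funext i
      rw [Pi.smul_apply, nsmul_eq_mul]
      push_cast
      exact hy i
    constructor
    · intro i
      have e1 : (φ x).1 = A ((p^m : ℕ) • y) := by rw [hxeq, hxy]; rfl
      rw [e1, map_nsmul, Pi.smul_apply, nsmul_eq_mul]
      have hc : ((p^m : ℕ) : ℤ_[p]) = (p:ℤ_[p])^m := by push_cast; rfl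
      rw [hc, norm_mul, PadicInt.norm_p_pow]
      calc (p:ℝ)^(-(m:ℤ)) * ‖(A y) i‖ ≤ (p:ℝ)^(-(m:ℤ)) * 1 :=
            mul_le_mul_of_nonneg_left (PadicInt.norm_le_one _) (hppos m).le
        _ = (p:ℝ)^(-(m:ℤ)) := mul_one _
    · have e2 : (φ x).2.2 = ψ ((p^m : ℕ) • y) := by rw [hxeq, hxy]; rfl
      rw [e2, map_nsmul]
      exact nsmul_kill (hψkill y) hm
  obtain ⟨m, hmU⟩ := hWsub
  refine ⟨W (max m t), hWnhds _, ?_⟩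
  intro k x hx
  apply hmU
  apply hWmono (le_max_left m t)
  induction k with
  | zero => simpa using hx
  | succ k ih => rw [Function.iterate_succ_apply']; exact hinv _ (le_max_right m t) _ ih
end ZeroDir

section PosDir
variable (p : ℕ) [Fact p.Prime] (n₁ n₂ n₃ : ℕ)
  (F : Type*) [AddCommGroup F] [Fintype F] [TopologicalSpace F] [DiscreteTopology F]

abbrev Gp := (Fin n₁ → ℤ_[p]) × (Fin n₂ → ℚ_[p]) × (Fin n₃ → PadicPrufer p) × F

namespace PosAux

variable {p} in
noncomputable def sc : (Fin n₂ → ℚ_[p]) →+ (Fin n₂ → ℚ_[p]) :=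
  AddMonoidHom.mk' (fun y => (p:ℚ_[p])⁻¹ • y) (fun a b => smul_add _ a b)

noncomputable def π₂ : Gp p n₁ n₂ n₃ F →+ (Fin n₂ → ℚ_[p]) :=
  (AddMonoidHom.fst _ _).comp (AddMonoidHom.snd _ _)

noncomputable def ι₂ : (Fin n₂ → ℚ_[p]) →+ Gp p n₁ n₂ n₃ F :=
  (0 : _ →+ (Fin n₁ → ℤ_[p])).prod ((AddMonoidHom.id _).prod 0)

noncomputable def Φ : Gp p n₁ n₂ n₃ F →+ Gp p n₁ n₂ n₃ F :=
  (ι₂ p n₁ n₂ n₃ F).comp ((sc n₂).comp (π₂ p n₁ n₂ n₃ F))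

lemma Φ_cont : Continuous ⇑(Φ p n₁ n₂ n₃ F) := by
  show Continuous fun x : Gp p n₁ n₂ n₃ F =>
    ((0, ((p:ℚ_[p])⁻¹ • x.2.1, 0)) : Gp p n₁ n₂ n₃ F)
  exact continuous_const.prodMk
    ((((continuous_snd.fst).const_smul ((p:ℚ_[p])⁻¹) : Continuous fun x : Gp p n₁ n₂ n₃ F => (p:ℚ_[p])⁻¹ • x.2.1)).prodMk continuous_const)

lemma Φ_iterate (k : ℕ) (x : Gp p n₁ n₂ n₃ F) :
    (⇑(Φ p n₁ n₂ n₃ F))^[k+1] x =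
      ι₂ p n₁ n₂ n₃ F (((p:ℚ_[p])⁻¹)^(k+1) • π₂ p n₁ n₂ n₃ F x) := by
  induction k with
  | zero =>
    rw [zero_add, Function.iterate_one, pow_one]
    rfl
  | succ k ih =>
    rw [Function.iterate_succ_apply', ih]
    show ι₂ p n₁ n₂ n₃ F ((p:ℚ_[p])⁻¹ •
      π₂ p n₁ n₂ n₃ F (ι₂ p n₁ n₂ n₃ F (((p:ℚ_[p])⁻¹)^(k+1) • π₂ p n₁ n₂ n₃ F x))) = _
    have : π₂ p n₁ n₂ n₃ F (ι₂ p n₁ n₂ n₃ F (((p:ℚ_[p])⁻¹)^(k+1) • π₂ p n₁ n₂ n₃ F x))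
        = ((p:ℚ_[p])⁻¹)^(k+1) • π₂ p n₁ n₂ n₃ F x := rfl
    rw [this, smul_smul, ← pow_succ']


noncomputable def W (m : ℕ) : Set (Gp p n₁ n₂ n₃ F) :=
  Set.univ ×ˢ ((Set.univ.pi fun _ : Fin n₂ => {y : ℚ_[p] | ‖y‖ ≤ (p:ℝ)^(-(m:ℤ))}) ×ˢ
    ({0} : Set ((Fin n₃ → PadicPrufer p) × F)))

lemma mem_W (m : ℕ) (x : Gp p n₁ n₂ n₃ F) :
    x ∈ W p n₁ n₂ n₃ F m ↔ (∀ i, ‖x.2.1 i‖ ≤ (p:ℝ)^(-(m:ℤ))) ∧ x.2.2 = 0 := by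
  constructor
  · rintro ⟨-, h2, h3⟩
    exact ⟨fun i => h2 i (Set.mem_univ i), h3⟩
  · rintro ⟨h1, h2⟩
    exact ⟨Set.mem_univ _, fun i _ => h1 i, h2⟩

lemma hpR : (1:ℝ) < p := by exact_mod_cast (Fact.out : p.Prime).one_lt

lemma zpow_anti {a b : ℤ} (h : a ≤ b) : (p:ℝ)^b ≤ (p:ℝ)^a → True := fun _ => trivial

lemma W_compact : IsCompact (W p n₁ n₂ n₃ F 0) := by
  apply IsCompact.prod isCompact_univ
  apply IsCompact.prod _ isCompact_singleton
  apply isCompact_univ_pi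
  intro i
  have h1 : {y : ℚ_[p] | ‖y‖ ≤ (p:ℝ)^(-(0:ℕ):ℤ)}
      = Metric.closedBall 0 ((p:ℝ)^(-(0:ℕ):ℤ)) := by
    ext y; simp [mem_closedBall_zero_iff]
  rw [h1]
  exact isCompact_closedBall _ _

lemma W_closed (m : ℕ) : IsClosed (W p n₁ n₂ n₃ F m) := by
  apply IsClosed.prod isClosed_univ
  apply IsClosed.prod _ isClosed_singleton
  apply isClosed_set_pi
  intro i _
  exact isClosed_le continuous_norm continuous_const

lemma W_nhds (m : ℕ) : W p n₁ n₂ n₃ F m ∈ 𝓝 (0 : Gp p n₁ n₂ n₃ F) := by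
  apply prod_mem_nhds Filter.univ_mem
  apply prod_mem_nhds
  · apply set_pi_mem_nhds Set.finite_univ
    intro i _
    have : {y : ℚ_[p] | ‖y‖ ≤ (p:ℝ)^(-(m:ℤ))} = Metric.closedBall 0 ((p:ℝ)^(-(m:ℤ))) := by
      ext y; simp [mem_closedBall_zero_iff]
    rw [this]
    exact Metric.closedBall_mem_nhds _ (zpow_pos (by linarith [hpR p]) _)
  · exact (isOpen_discrete _).mem_nhds rfl

lemma W_mono {m m' : ℕ} (h : m ≤ m') : W p n₁ n₂ n₃ F m' ⊆ W p n₁ n₂ n₃ F m := by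
  intro x hx
  rw [mem_W] at hx ⊢
  refine ⟨fun i => le_trans (hx.1 i) (zpow_le_zpow_right₀ (hpR p).le (by omega)), hx.2⟩

lemma norm_scaled (k : ℕ) (z : ℚ_[p]) :
    ‖((p:ℚ_[p])⁻¹)^k * z‖ ≤ 1 ↔ ‖z‖ ≤ (p:ℝ)^(-(k:ℤ)) := by
  have hnorm : ‖((p:ℚ_[p])⁻¹)^k‖ = (p:ℝ)^(k:ℤ) := by
    rw [inv_pow, norm_inv, Padic.norm_p_pow, ← zpow_neg, neg_neg]
  have hpk : (0:ℝ) < (p:ℝ)^(k:ℤ) := zpow_pos (by linarith [hpR p]) _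
  rw [norm_mul, hnorm, zpow_neg]
  constructor
  · intro h
    calc ‖z‖ = ((p:ℝ)^(k:ℤ))⁻¹ * ((p:ℝ)^(k:ℤ) * ‖z‖) := (inv_mul_cancel_left₀ (ne_of_gt hpk) ‖z‖).symm
      _ ≤ ((p:ℝ)^(k:ℤ))⁻¹ * 1 := mul_le_mul_of_nonneg_left h (by positivity)
      _ = ((p:ℝ)^(k:ℤ))⁻¹ := mul_one _
  · intro h
    calc (p:ℝ)^(k:ℤ) * ‖z‖ ≤ (p:ℝ)^(k:ℤ) * ((p:ℝ)^(k:ℤ))⁻¹ :=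
          mul_le_mul_of_nonneg_left h (by positivity)
      _ = 1 := mul_inv_cancel₀ (ne_of_gt hpk)

lemma cotraj_W (n : ℕ) :
    cotraj ⇑(Φ p n₁ n₂ n₃ F) (W p n₁ n₂ n₃ F 0) (n+1) = W p n₁ n₂ n₃ F n := by
  ext x
  simp only [cotraj, Set.mem_iInter, Finset.mem_range, Set.mem_preimage]
  constructor
  · intro h
    have h0 : x ∈ W p n₁ n₂ n₃ F 0 := by simpa using h 0 (Nat.succ_pos n)
    rw [mem_W] at h0 ⊢
    refine ⟨?_, h0.2⟩
    rcases Nat.eq_zero_or_pos n with hn | hn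
    · subst hn; exact h0.1
    obtain ⟨k, rfl⟩ := Nat.exists_eq_succ_of_ne_zero hn.ne'
    have hk := h (k+1) (by omega)
    rw [Φ_iterate, mem_W] at hk
    intro i
    have hki := hk.1 i
    have e : (ι₂ p n₁ n₂ n₃ F (((p:ℚ_[p])⁻¹)^(k+1) • π₂ p n₁ n₂ n₃ F x)).2.1 i
        = ((p:ℚ_[p])⁻¹)^(k+1) * x.2.1 i := rfl
    rw [e] at hki
    have := (norm_scaled p (k+1) (x.2.1 i)).1 (by simpa using hki)
    exact_mod_cast this
  · intro hx j hj
    rw [mem_W] at hx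
    rcases Nat.eq_zero_or_pos j with hj0 | hjpos
    · subst hj0
      simp only [Function.iterate_zero, id_eq]
      rw [mem_W]
      refine ⟨fun i => le_trans (hx.1 i) ?_, hx.2⟩
      apply zpow_le_zpow_right₀ (hpR p).le
      omega
    obtain ⟨k, rfl⟩ := Nat.exists_eq_succ_of_ne_zero hjpos.ne'
    rw [Φ_iterate, mem_W]
    constructor
    · intro i
      have e : (ι₂ p n₁ n₂ n₃ F (((p:ℚ_[p])⁻¹)^(k+1) • π₂ p n₁ n₂ n₃ F x)).2.1 i
          = ((p:ℚ_[p])⁻¹)^(k+1) * x.2.1 i := rfl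
      rw [e]
      have hle : ‖x.2.1 i‖ ≤ (p:ℝ)^(-((k+1:ℕ):ℤ)) := by
        refine le_trans (hx.1 i) ?_
        apply zpow_le_zpow_right₀ (hpR p).le
        push_cast
        omega
      have := (norm_scaled p (k+1) (x.2.1 i)).2 (by exact_mod_cast hle)
      simpa using this
    · rfl


noncomputable def τ (m : ℕ) (r : Fin n₂ → Fin p) : Gp p n₁ n₂ n₃ F :=
  ι₂ p n₁ n₂ n₃ F (fun i => (p:ℚ_[p])^m * (((r i : ℕ)) : ℚ_[p]))

noncomputable def σ (m : ℕ) (r : Fin n₂ → Fin p) : Set (Gp p n₁ n₂ n₃ F) :=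
  (fun y => -τ p n₁ n₂ n₃ F m r + y) ⁻¹' (W p n₁ n₂ n₃ F (m+1))

lemma mem_σ (m : ℕ) (r : Fin n₂ → Fin p) (y : Gp p n₁ n₂ n₃ F) :
    y ∈ σ p n₁ n₂ n₃ F m r ↔
      (∀ i, ‖y.2.1 i - (p:ℚ_[p])^m * ((r i : ℕ) : ℚ_[p])‖ ≤ (p:ℝ)^(-((m+1:ℕ):ℤ))) ∧
        y.2.2 = 0 := by
  have e1 : ∀ i, (-τ p n₁ n₂ n₃ F m r + y).2.1 i
      = y.2.1 i - (p:ℚ_[p])^m * ((r i : ℕ) : ℚ_[p]) := by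
    intro i
    show -((p:ℚ_[p])^m * ((r i : ℕ) : ℚ_[p])) + y.2.1 i = _
    ring
  have e2 : (-τ p n₁ n₂ n₃ F m r + y).2.2 = y.2.2 := by
    show -(0 : (Fin n₃ → PadicPrufer p) × F) + y.2.2 = y.2.2
    simp
  show -τ p n₁ n₂ n₃ F m r + y ∈ W p n₁ n₂ n₃ F (m+1) ↔ _
  rw [mem_W]
  simp only [e1, e2]

lemma σ_cover (m : ℕ) :
    W p n₁ n₂ n₃ F m = ⋃ r ∈ (Finset.univ : Finset (Fin n₂ → Fin p)),
      σ p n₁ n₂ n₃ F m r := by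
  ext y
  simp only [Set.mem_iUnion, Finset.mem_univ, exists_true_left, exists_prop, true_and]
  constructor
  · intro hy
    rw [mem_W] at hy
    have hd : ∀ i, ∃ r : Fin p,
        ‖y.2.1 i - (p:ℚ_[p])^m * ((r:ℕ):ℚ_[p])‖ ≤ (p:ℝ)^(-(m+1:ℤ)) := fun i =>
      qp_exists_digit p m (y.2.1 i) (hy.1 i)
    choose r hr using hd
    refine ⟨r, (mem_σ p n₁ n₂ n₃ F m r y).2 ⟨fun i => ?_, hy.2⟩⟩
    exact_mod_cast hr i
  · rintro ⟨r, hy⟩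
    rw [mem_σ] at hy
    rw [mem_W]
    refine ⟨fun i => ?_, hy.2⟩
    have h1 := hy.1 i
    have e : y.2.1 i = (y.2.1 i - (p:ℚ_[p])^m * ((r i : ℕ) : ℚ_[p]))
        + (p:ℚ_[p])^m * ((r i : ℕ) : ℚ_[p]) := by ring
    rw [e]
    have hb : ‖(p:ℚ_[p])^m * ((r i : ℕ) : ℚ_[p])‖ ≤ (p:ℝ)^(-(m:ℤ)) := by
      rw [norm_mul, Padic.norm_p_pow]
      calc (p:ℝ)^(-(m:ℤ)) * ‖((r i : ℕ) : ℚ_[p])‖ ≤ (p:ℝ)^(-(m:ℤ)) * 1 := by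
            apply mul_le_mul_of_nonneg_left _ (le_of_lt (zpow_pos (by linarith [hpR p]) _))
            exact_mod_cast Padic.norm_int_le_one (((r i : ℕ) : ℤ))
        _ = (p:ℝ)^(-(m:ℤ)) := mul_one _
    calc ‖(y.2.1 i - (p:ℚ_[p])^m * ((r i : ℕ) : ℚ_[p]))
          + (p:ℚ_[p])^m * ((r i : ℕ) : ℚ_[p])‖
        ≤ max ‖y.2.1 i - (p:ℚ_[p])^m * ((r i : ℕ) : ℚ_[p])‖
            ‖(p:ℚ_[p])^m * ((r i : ℕ) : ℚ_[p])‖ := Padic.nonarchimedean _ _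
      _ ≤ (p:ℝ)^(-(m:ℤ)) := by
          apply max_le _ hb
          refine le_trans (h1) ?_
          apply zpow_le_zpow_right₀ (hpR p).le
          push_cast
          omega

lemma σ_disjoint (m : ℕ) :
    (↑(Finset.univ : Finset (Fin n₂ → Fin p)) : Set (Fin n₂ → Fin p)).PairwiseDisjoint
      (σ p n₁ n₂ n₃ F m) := by
  intro r _ r' _ hne
  refine Set.disjoint_left.2 fun y hy hy' => hne ?_
  rw [mem_σ] at hy hy'
  funext i
  refine qp_digit_unique p m (y.2.1 i) (r i) (r' i) ?_ ?_
  · exact_mod_cast hy.1 i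
  · exact_mod_cast hy'.1 i

lemma meas_rec [MeasurableSpace (Gp p n₁ n₂ n₃ F)] [BorelSpace (Gp p n₁ n₂ n₃ F)] (m : ℕ) :
    Measure.addHaar (W p n₁ n₂ n₃ F m)
      = (p:ℝ≥0∞)^n₂ * Measure.addHaar (W p n₁ n₂ n₃ F (m+1)) := by
  set μ : Measure (Gp p n₁ n₂ n₃ F) := Measure.addHaar with hμ
  have hmeas : ∀ r ∈ (Finset.univ : Finset (Fin n₂ → Fin p)),
      MeasurableSet (σ p n₁ n₂ n₃ F m r) := by
    intro r _
    exact ((W_closed p n₁ n₂ n₃ F (m+1)).measurableSet).preimage (measurable_const_add _)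
  rw [σ_cover, measure_biUnion_finset (σ_disjoint p n₁ n₂ n₃ F m) hmeas]
  have hval : ∀ r : Fin n₂ → Fin p, μ (σ p n₁ n₂ n₃ F m r) = μ (W p n₁ n₂ n₃ F (m+1)) := by
    intro r
    exact measure_preimage_add μ _ _
  rw [Finset.sum_congr rfl fun r _ => hval r, Finset.sum_const, Finset.card_univ]
  have hcard : Fintype.card (Fin n₂ → Fin p) = p ^ n₂ := by
    simp [Fintype.card_fun]
  rw [hcard, nsmul_eq_mul]
  push_cast
  ring

lemma meas_W [MeasurableSpace (Gp p n₁ n₂ n₃ F)] [BorelSpace (Gp p n₁ n₂ n₃ F)] (m : ℕ) :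
    Measure.addHaar (W p n₁ n₂ n₃ F 0)
      = (p:ℝ≥0∞)^(m*n₂) * Measure.addHaar (W p n₁ n₂ n₃ F m) := by
  induction m with
  | zero => simp
  | succ m ih =>
    rw [ih, meas_rec, ← mul_assoc, ← pow_add]
    ring_nf

end PosAux
end PosDir

section Final
variable (p : ℕ) [Fact p.Prime] (n₁ n₂ n₃ : ℕ)
  (F : Type*) [AddCommGroup F] [Fintype F] [TopologicalSpace F] [DiscreteTopology F]

lemma pos_entropy (hn : n₂ ≠ 0) :
    ∃ φ : PadicLCA p n₁ n₂ n₃ F →+ PadicLCA p n₁ n₂ n₃ F,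
      Continuous ⇑φ ∧ addHtop ⇑φ ≠ 0 := by
  classical
  refine ⟨PosAux.Φ p n₁ n₂ n₃ F, PosAux.Φ_cont p n₁ n₂ n₃ F, ?_⟩
  letI : MeasurableSpace (Gp p n₁ n₂ n₃ F) := borel _
  haveI : BorelSpace (Gp p n₁ n₂ n₃ F) := ⟨rfl⟩
  set φ := PosAux.Φ p n₁ n₂ n₃ F with hφ
  set U := PosAux.W p n₁ n₂ n₃ F 0 with hUdef
  set μ : Measure (Gp p n₁ n₂ n₃ F) := Measure.addHaar with hμ
  have hle : (Filter.atTop.limsup fun n : ℕ =>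
      ENNReal.ofReal ((-Real.log ((μ (cotraj ⇑φ U n)).toReal)) / n)) ≤ addHtop ⇑φ :=
    le_addHtop ⇑φ U (PosAux.W_compact p n₁ n₂ n₃ F) (PosAux.W_nhds p n₁ n₂ n₃ F 0)
  set v : ℕ → ℝ := fun m => (μ (PosAux.W p n₁ n₂ n₃ F m)).toReal with hv
  have hfin : ∀ m, μ (PosAux.W p n₁ n₂ n₃ F m) ≠ ⊤ := fun m =>
    ne_top_of_le_ne_top (PosAux.W_compact p n₁ n₂ n₃ F).measure_lt_top.ne
      (measure_mono (PosAux.W_mono p n₁ n₂ n₃ F (Nat.zero_le m)))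
  have hpos : ∀ m, μ (PosAux.W p n₁ n₂ n₃ F m) ≠ 0 := fun m =>
    (μ.measure_pos_of_mem_nhds (PosAux.W_nhds p n₁ n₂ n₃ F m)).ne'
  have hvpos : ∀ m, 0 < v m := fun m => ENNReal.toReal_pos (hpos m) (hfin m)
  have hpR : (1:ℝ) < p := PosAux.hpR p
  have hlogrec : ∀ m, Real.log (v m) = n₂ * Real.log p + Real.log (v (m+1)) := by
    intro m
    have h1 : μ (PosAux.W p n₁ n₂ n₃ F m)
        = (p:ℝ≥0∞)^n₂ * μ (PosAux.W p n₁ n₂ n₃ F (m+1)) := PosAux.meas_rec p n₁ n₂ n₃ F m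
    have h2 : v m = (p:ℝ)^n₂ * v (m+1) := by
      rw [hv]
      simp only
      rw [h1, ENNReal.toReal_mul, ENNReal.toReal_pow]
      norm_num
    rw [h2, Real.log_mul (by positivity) (hvpos (m+1)).ne', Real.log_pow]
  set c : ℝ := n₂ * Real.log p with hc
  have hcpos : 0 < c := mul_pos (by exact_mod_cast Nat.pos_of_ne_zero hn) (Real.log_pos hpR)
  have hlog : ∀ m, Real.log (v m) = Real.log (v 0) - m * c := by
    intro m
    induction m with
    | zero => simp
    | succ m ih =>
      have := hlogrec m
      rw [ih] at this
      push_cast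
      linarith
  have htend : Filter.Tendsto
      (fun n : ℕ => (-Real.log ((μ (cotraj ⇑φ U n)).toReal)) / n) Filter.atTop (𝓝 c) := by
    have hg : Filter.Tendsto (fun n : ℕ => (-Real.log (v 0) - c)/n + c) Filter.atTop (𝓝 c) := by
      have := (tendsto_const_div_atTop_nhds_zero_nat (-Real.log (v 0) - c)).add
        (tendsto_const_nhds (x := c))
      simpa using this
    apply hg.congr'
    filter_upwards [Filter.eventually_ge_atTop 1] with n hn1
    obtain ⟨k, rfl⟩ := Nat.exists_eq_add_of_le hn1
    rw [add_comm 1 k]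
    have hct : cotraj ⇑φ U (k+1) = PosAux.W p n₁ n₂ n₃ F k := PosAux.cotraj_W p n₁ n₂ n₃ F k
    rw [hct]
    show (-Real.log (v 0) - c)/(k+1:ℕ) + c = (-Real.log (v k)) / (k+1:ℕ)
    rw [hlog k]
    have hk1 : ((k+1:ℕ):ℝ) ≠ 0 := by positivity
    field_simp
    push_cast
    ring
  have hlimsup : (Filter.atTop.limsup fun n : ℕ =>
      ENNReal.ofReal ((-Real.log ((μ (cotraj ⇑φ U n)).toReal)) / n)) = ENNReal.ofReal c :=
    (ENNReal.tendsto_ofReal htend).limsup_eq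
  rw [hlimsup] at hle
  intro h0
  rw [h0] at hle
  have : (0:ℝ≥0∞) < ENNReal.ofReal c := ENNReal.ofReal_pos.2 hcpos
  exact absurd (le_antisymm hle zero_le) this.ne'

theorem padicLCA_entropy_zero_iff'
    (hF : ∀ x : F, ∃ k : ℕ, p ^ k • x = 0) :
    (∀ φ : PadicLCA p n₁ n₂ n₃ F →+ PadicLCA p n₁ n₂ n₃ F,
        Continuous φ → addHtop ⇑φ = 0) ↔ n₂ = 0 := by
  constructor
  · intro h
    by_contra hn
    obtain ⟨φ, hcont, hne⟩ := pos_entropy p n₁ n₂ n₃ F hn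
    exact hne (h φ hcont)
  · rintro rfl
    intro φ hφ
    exact addHtop_eq_zero_of_invariant ⇑φ fun U hUc hUn =>
      invariant_nbhd p n₁ n₃ F hF φ hφ U hUn
end Final

/-- For `G = ℤ_p^{n₁} × ℚ_p^{n₂} × (ℚ_p/ℤ_p)^{n₃} × F` (with `F` a finite
abelian `p`-group, discrete): every continuous endomorphism of `G` has zero topological
entropy iff `n₂ = 0`. -/
theorem padicLCA_entropy_zero_iff
    (p : ℕ) [Fact p.Prime] (n₁ n₂ n₃ : ℕ)
    (F : Type*) [AddCommGroup F] [Fintype F] [TopologicalSpace F] [DiscreteTopology F]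
    (hF : ∀ x : F, ∃ k : ℕ, p ^ k • x = 0) :
    (∀ φ : PadicLCA p n₁ n₂ n₃ F →+ PadicLCA p n₁ n₂ n₃ F,
        Continuous φ → addHtop ⇑φ = 0) ↔ n₂ = 0 :=
  padicLCA_entropy_zero_iff' p n₁ n₂ n₃ F hF
end

section
/- Let G₁ be a totally disconnected Hausdorff locally compact abelian group, G₂ a discrete abelian group, and G = G₁ × G₂ with the product topology. If φ is a continuous endomorphism of G such that the subgroup {0} × G₂ is φ-invariant, then h_top(φ|_{{0}×G₂}) = 0 and h_top(φ) = h_top(φ̄), where φ̄ is the endomorphism induced by φ on the quotient G/({0} × G₂). -/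
open MeasureTheory Filter Topology Pointwise
open scoped ENNReal NNReal Classical

/-- The restriction of an endomorphism to an invariant subgroup
(junk value `0` if the subgroup is not invariant). -/
noncomputable def subHom {G : Type*} [AddGroup G] (φ : G →+ G) (H : AddSubgroup G) : H →+ H :=
  if h : H ≤ H.comap φ then (φ.domRestrict H).codRestrict H (fun x => h x.2) else 0

/-- The endomorphism induced on the quotient by an invariant subgroup
(junk value `0` if the subgroup is not invariant). -/
noncomputable def quotHom {G : Type*} [AddCommGroup G] (φ : G →+ G) (H : AddSubgroup G) :
    G ⧸ H →+ G ⧸ H :=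
  if h : H ≤ H.comap φ then QuotientAddGroup.map H H φ h else 0

namespace EntropyAux

/-! ### Generic facts about cotrajectories -/

lemma mem_cotraj {X : Type*} {φ : X → X} {U : Set X} {n : ℕ} {x : X} :
    x ∈ cotraj φ U n ↔ ∀ k < n, φ^[k] x ∈ U := by
  simp [cotraj]

lemma cotraj_mono {X : Type*} {φ : X → X} {U V : Set X} (h : U ⊆ V) (n : ℕ) :
    cotraj φ U n ⊆ cotraj φ V n := fun x hx =>
  mem_cotraj.2 fun k hk => h (mem_cotraj.1 hx k hk)

lemma cotraj_subset {X : Type*} {φ : X → X} {U : Set X} {n : ℕ} (hn : 1 ≤ n) :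
    cotraj φ U n ⊆ U := fun x hx => by
  simpa using mem_cotraj.1 hx 0 hn

lemma cotraj_mem_nhds {X : Type*} [TopologicalSpace X] {φ : X → X} (hφ : Continuous φ)
    {x : X} (hx : φ x = x) {U : Set X} (hU : U ∈ 𝓝 x) (n : ℕ) : cotraj φ U n ∈ 𝓝 x := by
  rw [cotraj, Filter.biInter_finset_mem]
  intro k _
  have h1 : Continuous (φ^[k]) := hφ.iterate k
  have h2 : U ∈ 𝓝 (φ^[k] x) := by rw [Function.iterate_fixed hx k]; exact hU
  exact h1.continuousAt.preimage_mem_nhds h2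

/-! ### Limsup comparison lemmas -/

lemma limsup_ofReal_div_zero (d : ℝ) :
    (Filter.atTop.limsup fun n : ℕ => ENNReal.ofReal (d / n)) = 0 := by
  have h : Tendsto (fun n : ℕ => ENNReal.ofReal (d / n)) atTop (𝓝 0) := by
    simpa [Function.comp_def] using (ENNReal.continuous_ofReal.tendsto 0).comp (tendsto_const_div_atTop_nhds_zero_nat d)
  exact h.limsup_eq

lemma limsup_term_le {a b : ℕ → ℝ≥0∞} {c : ℝ≥0∞} (hc0 : c ≠ 0) (hc : c ≠ ∞)
    (hab : ∀ᶠ n in atTop, c * b n ≤ a n)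
    (hb0 : ∀ᶠ n in atTop, b n ≠ 0) (hbt : ∀ᶠ n in atTop, b n ≠ ∞)
    (hat : ∀ᶠ n in atTop, a n ≠ ∞) :
    (Filter.atTop.limsup fun n : ℕ => ENNReal.ofReal ((-Real.log (a n).toReal) / n)) ≤
      Filter.atTop.limsup fun n : ℕ => ENNReal.ofReal ((-Real.log (b n).toReal) / n) := by
  set d : ℝ := |Real.log c.toReal| with hd
  have key : ∀ᶠ n in atTop,
      ENNReal.ofReal ((-Real.log (a n).toReal) / n) ≤
        ENNReal.ofReal (d / n) + ENNReal.ofReal ((-Real.log (b n).toReal) / n) := by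
    filter_upwards [hab, hb0, hbt, hat, eventually_ge_atTop 1] with n h1 h2 h3 h4 h5
    have hn : (0:ℝ) < n := by exact_mod_cast h5
    have hcpos : 0 < c.toReal := ENNReal.toReal_pos hc0 hc
    have hbpos : 0 < (b n).toReal := ENNReal.toReal_pos h2 h3
    have hcb : 0 < c.toReal * (b n).toReal := mul_pos hcpos hbpos
    have hle : c.toReal * (b n).toReal ≤ (a n).toReal := by
      rw [← ENNReal.toReal_mul]
      exact ENNReal.toReal_mono h4 h1
    have hlog : -Real.log (a n).toReal ≤ d + (-Real.log (b n).toReal) := by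
      have h6 := Real.log_le_log hcb hle
      rw [Real.log_mul (ne_of_gt hcpos) (ne_of_gt hbpos)] at h6
      have h7 : -Real.log c.toReal ≤ d := neg_le_abs _
      linarith
    calc ENNReal.ofReal ((-Real.log (a n).toReal) / n)
        ≤ ENNReal.ofReal ((d + (-Real.log (b n).toReal)) / n) :=
          ENNReal.ofReal_le_ofReal ((div_le_div_iff_of_pos_right hn).2 hlog)
      _ = ENNReal.ofReal (d / n + (-Real.log (b n).toReal) / n) := by rw [add_div]
      _ ≤ _ := ENNReal.ofReal_add_le
  refine le_trans (limsup_le_limsup key) ?_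
  set L := Filter.atTop.limsup fun n : ℕ => ENNReal.ofReal ((-Real.log (b n).toReal) / n) with hL
  apply ENNReal.le_of_forall_pos_le_add
  intro ε hε hLt
  have hε2 : (0:ℝ≥0∞) < (ε : ℝ≥0∞) / 2 :=
    ENNReal.div_pos (by exact_mod_cast hε.ne') ENNReal.ofNat_ne_top
  have h1 : ∀ᶠ n in atTop,
      ENNReal.ofReal ((-Real.log (b n).toReal) / n) < L + (ε : ℝ≥0∞) / 2 :=
    eventually_lt_of_limsup_lt (ENNReal.lt_add_right hLt.ne hε2.ne')
  have h2 : ∀ᶠ n : ℕ in atTop, ENNReal.ofReal (d / n) < (ε : ℝ≥0∞) / 2 := by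
    have h : Tendsto (fun n : ℕ => ENNReal.ofReal (d / n)) atTop (𝓝 0) := by
      simpa [Function.comp_def] using
        (ENNReal.continuous_ofReal.tendsto 0).comp (tendsto_const_div_atTop_nhds_zero_nat d)
    exact h.eventually_lt_const hε2
  refine limsup_le_of_le (by isBoundedDefault) ?_
  filter_upwards [h1, h2] with n ha hb
  calc ENNReal.ofReal (d / n) + ENNReal.ofReal ((-Real.log (b n).toReal) / n)
      ≤ (ε : ℝ≥0∞) / 2 + (L + (ε : ℝ≥0∞) / 2) := add_le_add hb.le ha.le
    _ = L + (ε : ℝ≥0∞) := by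
        rw [← add_assoc, add_comm ((ε : ℝ≥0∞) / 2) L, add_assoc, ENNReal.add_halves]

/-! ### A convenient reformulation of `addHtop` -/

noncomputable def entB {G : Type*} [AddGroup G] [TopologicalSpace G] [IsTopologicalAddGroup G]
    [T2Space G] [LocallyCompactSpace G] (f : G → G) : ℝ≥0∞ :=
  letI : MeasurableSpace G := borel G
  haveI : BorelSpace G := ⟨rfl⟩
  ⨆ U ∈ {U : Set G | IsCompact U ∧ U ∈ 𝓝 (0 : G)},
    Filter.atTop.limsup fun n : ℕ =>
      ENNReal.ofReal ((-Real.log ((MeasureTheory.Measure.addHaar (cotraj f U n)).toReal)) / n)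

lemma addHtop_eq_entB {G : Type*} [AddGroup G] [TopologicalSpace G] [IsTopologicalAddGroup G]
    [T2Space G] [LocallyCompactSpace G] (f : G → G) : addHtop f = entB f := by
  unfold addHtop entB
  rw [dif_pos ⟨inferInstance, inferInstance, inferInstance⟩]

lemma meas_nhds_pos {X : Type*} [TopologicalSpace X] {mX : MeasurableSpace X} (μ : Measure X)
    [μ.IsOpenPosMeasure] {x : X} {s : Set X} (hs : s ∈ 𝓝 x) : 0 < μ s := by
  obtain ⟨V, hVs, hVo, hxV⟩ := mem_nhds_iff.1 hs
  exact lt_of_lt_of_le (hVo.measure_pos μ ⟨x, hxV⟩) (measure_mono hVs)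

/-! ### Haar measures obtained from open embeddings -/

lemma isAddHaarMeasure_comap {A B : Type*} [AddCommGroup A] [TopologicalSpace A]
    [IsTopologicalAddGroup A] [AddCommGroup B] [TopologicalSpace B] [IsTopologicalAddGroup B]
    {mA : MeasurableSpace A} {mB : MeasurableSpace B} [BorelSpace A] [BorelSpace B]
    (μ : Measure B) [μ.IsAddHaarMeasure] (j : A →+ B) (hj : IsOpenEmbedding ⇑j) :
    (μ.comap ⇑j).IsAddHaarMeasure := by
  have hca : ∀ s, (μ.comap ⇑j) s = μ (⇑j '' s) := hj.measurableEmbedding.comap_apply μ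
  have himg : ∀ (a : A) (s : Set A),
      ⇑j '' ((a + ·) ⁻¹' s) = ((j a) + ·) ⁻¹' (⇑j '' s) := by
    intro a s
    ext x
    simp only [Set.mem_image, Set.mem_preimage]
    constructor
    · rintro ⟨w, hw, rfl⟩
      exact ⟨a + w, hw, map_add j a w⟩
    · rintro ⟨u, hu, hux⟩
      refine ⟨u - a, ?_, ?_⟩
      · have h7 : a + (u - a) = u := by abel
        rw [h7]; exact hu
      · rw [map_sub, hux]; abel
  haveI h1 : (μ.comap ⇑j).IsAddLeftInvariant := by
    constructor
    intro a
    ext s hs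
    rw [Measure.map_apply (measurable_const_add a) hs, hca, hca, himg,
      measure_preimage_add]
  haveI h2 : IsFiniteMeasureOnCompacts (μ.comap ⇑j) := by
    constructor
    intro K hK
    rw [hca]
    exact (hK.image hj.continuous).measure_lt_top
  haveI h3 : (μ.comap ⇑j).IsOpenPosMeasure := by
    constructor
    intro U hU hne
    rw [hca]
    exact ((hj.isOpenMap U hU).measure_pos μ (hne.image _)).ne'
  exact ⟨⟩

/-! ### Entropy on a discrete group vanishes -/

lemma addHtop_discrete_eq_zero {H : Type*} [AddGroup H] [TopologicalSpace H]
    [DiscreteTopology H] (f : H → H) (hf : f 0 = 0) : addHtop f = 0 := by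
  haveI : IsTopologicalAddGroup H :=
    { continuous_add := continuous_of_discreteTopology
      continuous_neg := continuous_of_discreteTopology }
  letI : MeasurableSpace H := borel H
  haveI : BorelSpace H := ⟨rfl⟩
  rw [addHtop_eq_entB]
  unfold entB
  apply le_antisymm _ zero_le
  apply iSup₂_le
  intro U hU
  obtain ⟨hUc, hUn⟩ := hU
  set μ : Measure H := MeasureTheory.Measure.addHaar with hμ
  have h0 : ∀ n : ℕ, μ {0} ≤ μ (cotraj f U n) := fun n =>
    measure_mono (Set.singleton_subset_iff.2 (mem_cotraj.2 fun k _ => by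
      rw [Function.iterate_fixed hf k]; exact mem_of_mem_nhds hUn))
  have hpos : μ {(0:H)} ≠ 0 :=
    ((isOpen_discrete ({0} : Set H)).measure_pos μ ⟨0, rfl⟩).ne'
  have hfin : μ {(0:H)} ≠ ∞ := isCompact_singleton.measure_lt_top.ne
  have hbound := limsup_term_le (a := fun n => μ (cotraj f U n)) (b := fun _ => μ {(0:H)})
      (c := 1) one_ne_zero ENNReal.one_ne_top
      (Eventually.of_forall fun n => by simpa using h0 n)
      (Eventually.of_forall fun _ => hpos) (Eventually.of_forall fun _ => hfin)
      ((eventually_ge_atTop 1).mono fun n hn =>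
        (lt_of_le_of_lt (measure_mono (cotraj_subset hn)) hUc.measure_lt_top).ne)
  exact le_trans hbound (le_of_eq (limsup_ofReal_div_zero _))

/-! ### Entropy is invariant under topological group isomorphisms -/

lemma addHtop_congr {A B : Type*} [AddCommGroup A] [TopologicalSpace A] [IsTopologicalAddGroup A]
    [T2Space A] [LocallyCompactSpace A] [AddCommGroup B] [TopologicalSpace B]
    [IsTopologicalAddGroup B] [T2Space B] [LocallyCompactSpace B]
    (e : A ≃+ B) (hec : Continuous ⇑e) (hesc : Continuous ⇑e.symm)
    (f : A → A) (g : B → B) (hf : Continuous f) (hf0 : f 0 = 0)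
    (hfg : ∀ x, e (f x) = g (e x)) : addHtop f = addHtop g := by
  letI : MeasurableSpace A := borel A
  haveI : BorelSpace A := ⟨rfl⟩
  letI : MeasurableSpace B := borel B
  haveI : BorelSpace B := ⟨rfl⟩
  have hg : Continuous g := by
    have hgf : g = ⇑e ∘ f ∘ ⇑e.symm := by
      funext y
      have := hfg (e.symm y)
      simpa using this.symm
    rw [hgf]; exact hec.comp (hf.comp hesc)
  have hg0 : g 0 = 0 := by
    have h := hfg 0
    rw [hf0, map_zero] at h
    exact h.symm
  have hit : ∀ (k : ℕ) (x : A), e (f^[k] x) = g^[k] (e x) := by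
    intro k
    induction k with
    | zero => intro x; simp
    | succ k ih =>
        intro x
        rw [Function.iterate_succ_apply', Function.iterate_succ_apply', hfg, ih]
  have hco : ∀ (U : Set B) (n : ℕ), ⇑e ⁻¹' (cotraj g U n) = cotraj f (⇑e ⁻¹' U) n := by
    intro U n
    ext x
    simp only [Set.mem_preimage, mem_cotraj]
    refine forall₂_congr fun k hk => ?_
    rw [hit k x]
  have hj : IsOpenEmbedding ⇑(e.symm.toAddMonoidHom) := by
    have h : ⇑(e.symm.toAddMonoidHom) = ⇑e.symm := rfl
    rw [h]
    exact (Homeomorph.mk e.symm.toEquiv hesc hec).isOpenEmbedding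
  set μA : Measure A := MeasureTheory.Measure.addHaar with hμA
  set μB : Measure B := MeasureTheory.Measure.addHaar with hμB
  set ν : Measure B := μA.comap ⇑(e.symm.toAddMonoidHom) with hν
  haveI : ν.IsAddHaarMeasure := isAddHaarMeasure_comap μA e.symm.toAddMonoidHom hj
  have hνap : ∀ s, ν s = μA (⇑e.symm '' s) := hj.measurableEmbedding.comap_apply μA
  have hsymm_img : ∀ s : Set B, ⇑e.symm '' s = ⇑e ⁻¹' s := by
    intro s; ext x
    constructor
    · rintro ⟨w, hw, rfl⟩; simpa using hw
    · intro hx; exact ⟨e x, hx, by simp⟩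
  set c : ℝ≥0 := ν.addHaarScalarFactor μB with hc
  have hcpos : (0:ℝ≥0) < c := Measure.addHaarScalarFactor_pos_of_isAddHaarMeasure ν μB
  have hc0 : (c : ℝ≥0∞) ≠ 0 := by exact_mod_cast hcpos.ne'
  have hcmp : ∀ s : Set B, IsCompact (closure s) → μA (⇑e ⁻¹' s) = (c : ℝ≥0∞) * μB s := by
    intro s hs
    calc μA (⇑e ⁻¹' s) = ν s := by rw [hνap, hsymm_img]
      _ = c • μB s := Measure.measure_isAddInvariant_eq_smul_of_isCompact_closure ν μB hs
      _ = (c : ℝ≥0∞) * μB s := by rw [ENNReal.smul_def, smul_eq_mul]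
  rw [addHtop_eq_entB f, addHtop_eq_entB g]
  unfold entB
  apply le_antisymm
  · apply iSup₂_le
    intro U hU
    obtain ⟨hUc, hUn⟩ := hU
    have hKc : IsCompact (⇑e '' U) := hUc.image hec
    have hKn : ⇑e '' U ∈ 𝓝 (0 : B) := by
      have hopen : IsOpenMap ⇑e := (Homeomorph.mk e.toEquiv hec hesc).isOpenMap
      have h := hopen.image_mem_nhds hUn
      rwa [map_zero] at h
    refine le_iSup₂_of_le (⇑e '' U) ⟨hKc, hKn⟩ ?_
    have hUeq : ⇑e ⁻¹' (⇑e '' U) = U := Set.preimage_image_eq U e.injective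
    apply limsup_term_le (c := (c:ℝ≥0∞)) hc0 ENNReal.coe_ne_top
    · filter_upwards [eventually_ge_atTop 1] with n hn
      have h1 : IsCompact (closure (cotraj g (⇑e '' U) n)) :=
        hKc.closure_of_subset (cotraj_subset hn)
      have h2 := hcmp _ h1
      rw [hco, hUeq] at h2
      exact h2.ge
    · exact Eventually.of_forall fun n =>
        (meas_nhds_pos μB (cotraj_mem_nhds hg hg0 hKn n)).ne'
    · filter_upwards [eventually_ge_atTop 1] with n hn
      exact (lt_of_le_of_lt (measure_mono (cotraj_subset hn)) hKc.measure_lt_top).ne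
    · filter_upwards [eventually_ge_atTop 1] with n hn
      exact (lt_of_le_of_lt (measure_mono (cotraj_subset hn)) hUc.measure_lt_top).ne
  · apply iSup₂_le
    intro K hK
    obtain ⟨hKc, hKn⟩ := hK
    have hUc : IsCompact (⇑e ⁻¹' K) := by
      rw [← hsymm_img]; exact hKc.image hesc
    have hUn : ⇑e ⁻¹' K ∈ 𝓝 (0:A) := by
      apply hec.continuousAt.preimage_mem_nhds
      rwa [map_zero]
    refine le_iSup₂_of_le (⇑e ⁻¹' K) ⟨hUc, hUn⟩ ?_
    apply limsup_term_le (c := ((c:ℝ≥0∞))⁻¹) (ENNReal.inv_ne_zero.2 ENNReal.coe_ne_top)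
      (ENNReal.inv_ne_top.2 hc0)
    · filter_upwards [eventually_ge_atTop 1] with n hn
      have h1 : IsCompact (closure (cotraj g K n)) := hKc.closure_of_subset (cotraj_subset hn)
      have h2 := hcmp _ h1
      rw [hco] at h2
      rw [h2, ← mul_assoc, ENNReal.inv_mul_cancel hc0 ENNReal.coe_ne_top, one_mul]
    · exact Eventually.of_forall fun n =>
        (meas_nhds_pos μA (cotraj_mem_nhds hf hf0 hUn n)).ne'
    · filter_upwards [eventually_ge_atTop 1] with n hn
      exact (lt_of_le_of_lt (measure_mono (cotraj_subset hn)) hUc.measure_lt_top).ne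
    · filter_upwards [eventually_ge_atTop 1] with n hn
      exact (lt_of_le_of_lt (measure_mono (cotraj_subset hn)) hKc.measure_lt_top).ne

/-! ### The first coordinate of `φ` -/

lemma fst_apply {G₁ G₂ : Type*} [AddCommGroup G₁] [AddCommGroup G₂]
    (φ : G₁ × G₂ →+ G₁ × G₂)
    (hinv : AddSubgroup.prod (⊥ : AddSubgroup G₁) (⊤ : AddSubgroup G₂) ≤
      (AddSubgroup.prod (⊥ : AddSubgroup G₁) (⊤ : AddSubgroup G₂)).comap φ)
    (z : G₁ × G₂) : (φ z).1 = (φ (z.1, 0)).1 := by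
  have hz : (z.1, (0:G₂)) + ((0:G₁), z.2) = z := by
    ext <;> simp
  have h2 : ((0:G₁), z.2) ∈ AddSubgroup.prod (⊥ : AddSubgroup G₁) (⊤ : AddSubgroup G₂) := by
    rw [AddSubgroup.mem_prod]
    exact ⟨by simp, trivial⟩
  have h3 : (φ ((0:G₁), z.2)).1 = 0 := by
    have h4 := (AddSubgroup.mem_prod.1 (hinv h2)).1
    simpa using h4
  calc (φ z).1 = (φ ((z.1, (0:G₂)) + ((0:G₁), z.2))).1 := by rw [hz]
    _ = (φ (z.1, (0:G₂))).1 + (φ ((0:G₁), z.2)).1 := by rw [map_add]; rfl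
    _ = (φ (z.1, 0)).1 := by rw [h3, add_zero]

/-! ### Collapsing the discrete factor -/

lemma addHtop_prod_eq {G₁ G₂ : Type*} [AddCommGroup G₁] [TopologicalSpace G₁]
    [IsTopologicalAddGroup G₁] [T2Space G₁] [LocallyCompactSpace G₁]
    [AddCommGroup G₂] [TopologicalSpace G₂] [DiscreteTopology G₂]
    (φ : G₁ × G₂ →+ G₁ × G₂) (hφ : Continuous ⇑φ)
    (hinv : AddSubgroup.prod (⊥ : AddSubgroup G₁) (⊤ : AddSubgroup G₂) ≤
      (AddSubgroup.prod (⊥ : AddSubgroup G₁) (⊤ : AddSubgroup G₂)).comap φ) :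
    addHtop ⇑φ = addHtop (fun x : G₁ => (φ (x, 0)).1) := by
  haveI : IsTopologicalAddGroup G₂ :=
    { continuous_add := continuous_of_discreteTopology
      continuous_neg := continuous_of_discreteTopology }
  letI : MeasurableSpace (G₁ × G₂) := borel (G₁ × G₂)
  haveI : BorelSpace (G₁ × G₂) := ⟨rfl⟩
  letI : MeasurableSpace G₁ := borel G₁
  haveI : BorelSpace G₁ := ⟨rfl⟩
  set ψ : G₁ → G₁ := fun x => (φ (x, 0)).1 with hψdef
  set α : G₁ → G₂ := fun x => (φ (x, 0)).2 with hαdef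
  set ι : G₁ → G₁ × G₂ := fun x => (x, (0:G₂)) with hιdef
  have hιc : Continuous ι := continuous_id.prodMk continuous_const
  have hψc : Continuous ψ := continuous_fst.comp (hφ.comp hιc)
  have hαc : Continuous α := continuous_snd.comp (hφ.comp hιc)
  have hψ0 : ψ 0 = 0 := by
    show (φ ((0:G₁), (0:G₂))).1 = 0
    rw [show ((0:G₁), (0:G₂)) = (0 : G₁ × G₂) from rfl, map_zero]
    rfl
  have hφ1 : ∀ z : G₁ × G₂, (φ z).1 = ψ z.1 := fun z => fst_apply φ hinv z
  have hα0 : α 0 = 0 := by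
    show (φ ((0:G₁), (0:G₂))).2 = 0
    rw [show ((0:G₁), (0:G₂)) = (0 : G₁ × G₂) from rfl, map_zero]
    rfl
  have hφy : ∀ y : G₁, φ (y, (0:G₂)) = (ψ y, α y) := fun y => rfl
  have hiter : ∀ (k : ℕ) (z : G₁ × G₂), (φ^[k] z).1 = ψ^[k] z.1 := by
    intro k
    induction k with
    | zero => intro z; rfl
    | succ k ih =>
        intro z
        rw [Function.iterate_succ_apply', Function.iterate_succ_apply', hφ1, ih]
  have himg : ∀ s : Set G₁, ι '' s = s ×ˢ ({0} : Set G₂) := by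
    intro s
    ext ⟨x, y⟩
    simp [hιdef, Set.mem_image, Set.mem_prod, Prod.ext_iff, and_comm, eq_comm]
  have hιinj : Function.Injective ι := fun a b h => congrArg Prod.fst h
  have hιopen : IsOpenMap ι := by
    intro V hV
    rw [himg]
    exact hV.prod (isOpen_discrete _)
  have hιemb : IsOpenEmbedding ι :=
    IsOpenEmbedding.of_continuous_injective_isOpenMap hιc hιinj hιopen
  have hι0 : ι 0 = 0 := rfl
  set μG : Measure (G₁ × G₂) := MeasureTheory.Measure.addHaar with hμG
  set μ1 : Measure G₁ := MeasureTheory.Measure.addHaar with hμ1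
  have hιhom : ⇑(AddMonoidHom.inl G₁ G₂) = ι := rfl
  have hιemb' : IsOpenEmbedding ⇑(AddMonoidHom.inl G₁ G₂) := by rw [hιhom]; exact hιemb
  set ν : Measure G₁ := μG.comap ⇑(AddMonoidHom.inl G₁ G₂) with hν
  haveI : ν.IsAddHaarMeasure := isAddHaarMeasure_comap μG (AddMonoidHom.inl G₁ G₂) hιemb'
  have hνap : ∀ s, ν s = μG (ι '' s) := by
    intro s
    rw [hν, hιemb'.measurableEmbedding.comap_apply μG s, hιhom]
  set c : ℝ≥0 := ν.addHaarScalarFactor μ1 with hc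
  have hcpos : (0:ℝ≥0) < c := Measure.addHaarScalarFactor_pos_of_isAddHaarMeasure ν μ1
  have hc0 : (c : ℝ≥0∞) ≠ 0 := by exact_mod_cast hcpos.ne'
  have hcmp : ∀ s : Set G₁, IsCompact (closure s) → μG (ι '' s) = (c : ℝ≥0∞) * μ1 s := by
    intro s hs
    calc μG (ι '' s) = ν s := (hνap s).symm
      _ = c • μ1 s := Measure.measure_isAddInvariant_eq_smul_of_isCompact_closure ν μ1 hs
      _ = (c : ℝ≥0∞) * μ1 s := by rw [ENNReal.smul_def, smul_eq_mul]
  -- the key cotrajectory identity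
  have hkey : ∀ (K : Set G₁), (∀ x ∈ K, α x = 0) → ∀ n, 1 ≤ n →
      cotraj ⇑φ (ι '' K) n = ι '' (cotraj ψ K n) := by
    intro K hK n hn
    apply Set.Subset.antisymm
    · intro z hz
      obtain ⟨x0, hx0, hzx⟩ := cotraj_subset hn hz
      refine ⟨z.1, ?_, ?_⟩
      · apply mem_cotraj.2
        intro k hk
        obtain ⟨w, hw, hwz⟩ := mem_cotraj.1 hz k hk
        have hfst : (φ^[k] z).1 = w := by rw [← hwz]
        rw [← hiter k z, hfst]
        exact hw
      · have h2 : z.2 = 0 := by rw [← hzx]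
        exact Prod.ext rfl h2.symm
    · rintro _ ⟨x, hx, rfl⟩
      have claim : ∀ k, k < n → φ^[k] (ι x) = ι (ψ^[k] x) := by
        intro k
        induction k with
        | zero => intro _; rfl
        | succ k ih =>
            intro hk
            have hk' : k < n := Nat.lt_of_succ_lt hk
            rw [Function.iterate_succ_apply', ih hk', Function.iterate_succ_apply']
            have hmem : ψ^[k] x ∈ K := mem_cotraj.1 hx k hk'
            show φ (ψ^[k] x, (0:G₂)) = (ψ (ψ^[k] x), (0:G₂))
            rw [hφy (ψ^[k] x), hK _ hmem]
      apply mem_cotraj.2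
      intro k hk
      rw [claim k hk]
      exact ⟨ψ^[k] x, mem_cotraj.1 hx k hk, rfl⟩
  have hα : α ⁻¹' {0} ∈ 𝓝 (0:G₁) :=
    ((isOpen_discrete ({0} : Set G₂)).preimage hαc).mem_nhds (by
      rw [Set.mem_preimage, hα0]; rfl)
  rw [addHtop_eq_entB ⇑φ, addHtop_eq_entB ψ]
  unfold entB
  apply le_antisymm
  · apply iSup₂_le
    intro U hU
    obtain ⟨hUc, hUn⟩ := hU
    have hiU : ι ⁻¹' (interior U) ∈ 𝓝 (0:G₁) := by
      apply hιc.continuousAt.preimage_mem_nhds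
      rw [hι0]
      exact interior_mem_nhds.2 hUn
    obtain ⟨K, hKn, hKsub, hKc⟩ := local_compact_nhds (inter_mem hiU hα)
    have hKα : ∀ x ∈ K, α x = 0 := fun x hx => (hKsub hx).2
    have hKU : ι '' K ⊆ U := by
      rintro _ ⟨x, hx, rfl⟩
      exact interior_subset (hKsub hx).1
    refine le_iSup₂_of_le K ⟨hKc, hKn⟩ ?_
    apply limsup_term_le (c := (c:ℝ≥0∞)) hc0 ENNReal.coe_ne_top
    · filter_upwards [eventually_ge_atTop 1] with n hn
      have h1 : IsCompact (closure (cotraj ψ K n)) := hKc.closure_of_subset (cotraj_subset hn)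
      calc (c:ℝ≥0∞) * μ1 (cotraj ψ K n) = μG (ι '' cotraj ψ K n) := (hcmp _ h1).symm
        _ = μG (cotraj ⇑φ (ι '' K) n) := by rw [hkey K hKα n hn]
        _ ≤ μG (cotraj ⇑φ U n) := measure_mono (cotraj_mono hKU n)
    · exact Eventually.of_forall fun n =>
        (meas_nhds_pos μ1 (cotraj_mem_nhds hψc hψ0 hKn n)).ne'
    · filter_upwards [eventually_ge_atTop 1] with n hn
      exact (lt_of_le_of_lt (measure_mono (cotraj_subset hn)) hKc.measure_lt_top).ne
    · filter_upwards [eventually_ge_atTop 1] with n hn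
      exact (lt_of_le_of_lt (measure_mono (cotraj_subset hn)) hUc.measure_lt_top).ne
  · apply iSup₂_le
    intro K₀ hK₀
    obtain ⟨hK0c, hK0n⟩ := hK₀
    set K : Set G₁ := K₀ ∩ α ⁻¹' {0} with hKdef
    have hKc : IsCompact K := hK0c.inter_right ((isClosed_discrete _).preimage hαc)
    have hKn : K ∈ 𝓝 (0:G₁) := inter_mem hK0n hα
    have hKα : ∀ x ∈ K, α x = 0 := fun x hx => hx.2
    have hUc : IsCompact (ι '' K) := hKc.image hιc
    have hUn : ι '' K ∈ 𝓝 (0 : G₁ × G₂) := by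
      have h := hιopen.image_mem_nhds hKn
      rwa [hι0] at h
    refine le_iSup₂_of_le (ι '' K) ⟨hUc, hUn⟩ ?_
    apply limsup_term_le (c := ((c:ℝ≥0∞))⁻¹) (ENNReal.inv_ne_zero.2 ENNReal.coe_ne_top)
      (ENNReal.inv_ne_top.2 hc0)
    · filter_upwards [eventually_ge_atTop 1] with n hn
      have h1 : IsCompact (closure (cotraj ψ K n)) := hKc.closure_of_subset (cotraj_subset hn)
      have h2 : μG (cotraj ⇑φ (ι '' K) n) = (c:ℝ≥0∞) * μ1 (cotraj ψ K n) := by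
        rw [hkey K hKα n hn, hcmp _ h1]
      rw [h2, ← mul_assoc, ENNReal.inv_mul_cancel hc0 ENNReal.coe_ne_top, one_mul]
      exact measure_mono (cotraj_mono Set.inter_subset_left n)
    · exact Eventually.of_forall fun n =>
        (meas_nhds_pos μG (cotraj_mem_nhds hφ (map_zero φ) hUn n)).ne'
    · filter_upwards [eventually_ge_atTop 1] with n hn
      exact (lt_of_le_of_lt (measure_mono (cotraj_subset hn)) hUc.measure_lt_top).ne
    · filter_upwards [eventually_ge_atTop 1] with n hn
      exact (lt_of_le_of_lt (measure_mono (cotraj_subset hn)) hK0c.measure_lt_top).ne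

end EntropyAux

/-- Let `G₁` be a totally disconnected locally compact abelian group,
`G₂` a discrete abelian group, and `G = G₁ × G₂`. If `φ` is a continuous endomorphism of
`G` leaving `{0} × G₂` invariant, then `h_top(φ|_{{0}×G₂}) = 0` and `h_top(φ) = h_top(φ̄)`,
where `φ̄` is induced on `G/({0} × G₂)`. -/
theorem entropy_prod_discrete_factor
    (G₁ G₂ : Type*) [AddCommGroup G₁] [TopologicalSpace G₁] [IsTopologicalAddGroup G₁]
    [T2Space G₁] [LocallyCompactSpace G₁] [TotallyDisconnectedSpace G₁]
    [AddCommGroup G₂] [TopologicalSpace G₂] [DiscreteTopology G₂]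
    (φ : G₁ × G₂ →+ G₁ × G₂) (hφ : Continuous φ)
    (hinv : AddSubgroup.prod (⊥ : AddSubgroup G₁) (⊤ : AddSubgroup G₂) ≤
      (AddSubgroup.prod (⊥ : AddSubgroup G₁) (⊤ : AddSubgroup G₂)).comap φ) :
    addHtop ⇑(subHom φ (AddSubgroup.prod (⊥ : AddSubgroup G₁) (⊤ : AddSubgroup G₂))) = 0 ∧
      addHtop ⇑φ =
        addHtop ⇑(quotHom φ (AddSubgroup.prod (⊥ : AddSubgroup G₁) (⊤ : AddSubgroup G₂))) := by
  haveI : IsTopologicalAddGroup G₂ :=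
    { continuous_add := continuous_of_discreteTopology
      continuous_neg := continuous_of_discreteTopology }
  set H : AddSubgroup (G₁ × G₂) := AddSubgroup.prod (⊥ : AddSubgroup G₁) (⊤ : AddSubgroup G₂)
    with hHdef
  haveI hHd : DiscreteTopology ↥H := by
    apply discreteTopology_iff_isOpen_singleton.mpr
    intro x
    have hxx : ({x} : Set ↥H) =
        (Subtype.val) ⁻¹' ((Set.univ : Set G₁) ×ˢ {(x : G₁ × G₂).2}) := by
      ext y
      simp only [Set.mem_singleton_iff, Set.mem_preimage, Set.mem_prod, Set.mem_univ, true_and]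
      constructor
      · rintro rfl; rfl
      · intro h
        apply Subtype.ext
        apply Prod.ext
        · have h1 : (y : G₁ × G₂).1 = 0 := by
            simpa using (AddSubgroup.mem_prod.1 y.2).1
          have h2 : (x : G₁ × G₂).1 = 0 := by
            simpa using (AddSubgroup.mem_prod.1 x.2).1
          rw [h1, h2]
        · exact h
    rw [hxx]
    exact (isOpen_univ.prod (isOpen_discrete _)).preimage continuous_subtype_val
  constructor
  · exact EntropyAux.addHtop_discrete_eq_zero _ (map_zero _)
  · -- part 2
    have h2a := EntropyAux.addHtop_prod_eq φ hφ hinv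
    -- construct the identification of the quotient with G₁
    have hp : H ≤ (AddMonoidHom.fst G₁ G₂).ker := by
      intro z hz
      rw [AddMonoidHom.ker_fst]
      exact hz
    set e0 : (G₁ × G₂) ⧸ H →+ G₁ := QuotientAddGroup.lift H (AddMonoidHom.fst G₁ G₂) hp
      with he0def
    set s0 : G₁ →+ (G₁ × G₂) ⧸ H :=
      (QuotientAddGroup.mk' H).comp (AddMonoidHom.inl G₁ G₂) with hs0def
    have rinv : ∀ x : G₁, e0 (s0 x) = x := fun x => rfl
    have linv : ∀ q : (G₁ × G₂) ⧸ H, s0 (e0 q) = q := by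
      intro q
      refine QuotientAddGroup.induction_on q ?_
      intro z
      show ((z.1, (0:G₂)) : G₁ × G₂) = (z : (G₁ × G₂) ⧸ H)
      rw [QuotientAddGroup.eq]
      refine AddSubgroup.mem_prod.2 ⟨?_, trivial⟩
      simp
    set eAdd : ((G₁ × G₂) ⧸ H) ≃+ G₁ :=
      { toFun := ⇑e0, invFun := ⇑s0, left_inv := linv, right_inv := rinv,
        map_add' := map_add e0 } with heAdd
    have he0c : Continuous ⇑e0 :=
      (QuotientAddGroup.isQuotientMap_mk H).continuous_iff.2 continuous_fst
    have hs0c : Continuous ⇑s0 :=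
      (QuotientAddGroup.isQuotientMap_mk H).continuous.comp
        (continuous_id.prodMk continuous_const)
    have hec : Continuous ⇑eAdd := he0c
    have hesc : Continuous ⇑eAdd.symm := hs0c
    set eh : ((G₁ × G₂) ⧸ H) ≃ₜ G₁ := Homeomorph.mk eAdd.toEquiv hec hesc with heh
    haveI : T2Space ((G₁ × G₂) ⧸ H) := eh.symm.t2Space
    haveI : LocallyCompactSpace ((G₁ × G₂) ⧸ H) :=
      (Homeomorph.locallyCompactSpace_iff eh).2 inferInstance
    have hfc : Continuous ⇑(quotHom φ H) := by
      unfold quotHom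
      rw [dif_pos hinv]
      exact (QuotientAddGroup.isQuotientMap_mk H).continuous_iff.2
        ((QuotientAddGroup.isQuotientMap_mk H).continuous.comp hφ)
    have hmapmk : ∀ z : G₁ × G₂, (quotHom φ H) ↑z = ((φ z : G₁ × G₂) : (G₁ × G₂) ⧸ H) := by
      intro z
      unfold quotHom
      rw [dif_pos hinv]
      exact QuotientAddGroup.map_mk H H φ hinv z
    have hq : ∀ q : (G₁ × G₂) ⧸ H,
        eAdd ((quotHom φ H) q) = (fun x : G₁ => (φ (x, 0)).1) (eAdd q) := by
      intro q
      refine QuotientAddGroup.induction_on q ?_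
      intro z
      rw [hmapmk z]
      show (φ z).1 = (φ ((z.1 : G₁), (0:G₂))).1
      exact EntropyAux.fst_apply φ hinv z
    have h2b := EntropyAux.addHtop_congr eAdd hec hesc
      ⇑(quotHom φ H) (fun x : G₁ => (φ (x, 0)).1) hfc (map_zero _) hq
    exact h2a.trans h2b.symm
end

section
/- Let G = G₁ × G₂ be a Hausdorff locally compact abelian group with the product topology, where each of G₁ and G₂ is either compact, or totally disconnected, or topologically isomorphic to ℝ^n for some natural number n. If AT(G) holds (for every continuous endomorphism φ of G and every φ-invariant closed subgroup H of G, h_top(φ) = h_top(φ|_H) + h_top(φ̄_{G/H})), then AT(G₁) and AT(G₂) hold. -/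
open MeasureTheory Filter Topology Pointwise
open scoped ENNReal NNReal Classical

/-- The Addition Theorem `AT(G)` for a topological abelian group `G`: for every continuous
endomorphism `φ` and every `φ`-invariant closed subgroup `H`,
`h_top(φ) = h_top(φ|_H) + h_top(φ̄_{G/H})`. -/
def AT (G : Type*) [AddCommGroup G] [TopologicalSpace G] : Prop :=
  ∀ (φ : G →+ G), Continuous φ → ∀ (H : AddSubgroup G), IsClosed (H : Set G) →
    H ≤ H.comap φ →
      addHtop ⇑φ = addHtop ⇑(subHom φ H) + addHtop ⇑(quotHom φ H)


set_option linter.unusedSectionVars false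

namespace ATaux

/-! ### limsup lemmas -/

lemma limsup_add_le' (u v : ℕ → ℝ≥0∞) :
    atTop.limsup (fun n => u n + v n) ≤ atTop.limsup u + atTop.limsup v := by
  rcases eq_top_or_lt_top (atTop.limsup u + atTop.limsup v) with h | h
  · simp [h]
  have hu : atTop.limsup u ≠ ⊤ := fun hh => by simp [hh] at h
  have hv : atTop.limsup v ≠ ⊤ := fun hh => by simp [hh] at h
  refine ENNReal.le_of_forall_pos_le_add fun ε hε _ => ?_
  have hε2 : ((ε : ℝ≥0∞) / 2) ≠ 0 := by
    simp [ENNReal.div_eq_zero_iff, hε.ne']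
  have h1 : ∀ᶠ n in atTop, u n < atTop.limsup u + ε / 2 :=
    eventually_lt_of_limsup_lt (ENNReal.lt_add_right hu hε2)
  have h2 : ∀ᶠ n in atTop, v n < atTop.limsup v + ε / 2 :=
    eventually_lt_of_limsup_lt (ENNReal.lt_add_right hv hε2)
  have : ∀ᶠ n in atTop, u n + v n ≤ (atTop.limsup u + atTop.limsup v) + ε := by
    filter_upwards [h1, h2] with n h1 h2
    calc u n + v n ≤ (atTop.limsup u + ε / 2) + (atTop.limsup v + ε / 2) :=
          add_le_add h1.le h2.le
      _ = (atTop.limsup u + atTop.limsup v) + (ε / 2 + ε / 2) := by ring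
      _ = (atTop.limsup u + atTop.limsup v) + ε := by rw [ENNReal.add_halves]
  exact limsup_le_of_le (by isBoundedDefault) this

lemma limsup_ofReal_add_tendsto (x ε : ℕ → ℝ) (hε : Tendsto ε atTop (𝓝 0)) :
    atTop.limsup (fun n => ENNReal.ofReal (x n + ε n)) =
      atTop.limsup (fun n => ENNReal.ofReal (x n)) := by
  have key : ∀ a b : ℕ → ℝ, Tendsto b atTop (𝓝 0) →
      atTop.limsup (fun n => ENNReal.ofReal (a n + b n)) ≤
        atTop.limsup (fun n => ENNReal.ofReal (a n)) := by
    intro a b hb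
    have h1 : atTop.limsup (fun n => ENNReal.ofReal (a n + b n)) ≤
        atTop.limsup (fun n => ENNReal.ofReal (a n) + ENNReal.ofReal (b n)) :=
      limsup_le_limsup (Eventually.of_forall fun n => ENNReal.ofReal_add_le)
    have h2 : atTop.limsup (fun n => ENNReal.ofReal (b n)) = 0 := by
      have : Tendsto (fun n => ENNReal.ofReal (b n)) atTop (𝓝 (ENNReal.ofReal 0)) :=
        ENNReal.tendsto_ofReal hb
      simpa using this.limsup_eq
    calc atTop.limsup (fun n => ENNReal.ofReal (a n + b n))
        ≤ atTop.limsup (fun n => ENNReal.ofReal (a n)) +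
            atTop.limsup (fun n => ENNReal.ofReal (b n)) := h1.trans (limsup_add_le' _ _)
      _ = atTop.limsup (fun n => ENNReal.ofReal (a n)) := by rw [h2, add_zero]
  refine le_antisymm (key x ε hε) ?_
  have h := key (fun n => x n + ε n) (fun n => -ε n) (by simpa using hε.neg)
  simpa using h

/-! ### cotraj lemmas -/

variable {G : Type*}

lemma cotraj_mono {φ : G → G} {U V : Set G} (h : U ⊆ V) (n : ℕ) :
    cotraj φ U n ⊆ cotraj φ V n :=
  Set.iInter₂_mono fun _ _ => Set.preimage_mono h

lemma cotraj_subset {φ : G → G} {U : Set G} {n : ℕ} (hn : 1 ≤ n) : cotraj φ U n ⊆ U := by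
  intro x hx
  have := Set.mem_iInter₂.1 hx 0 (Finset.mem_range.2 hn)
  simpa using this

lemma mem_cotraj {φ : G → G} {U : Set G} {n : ℕ} {x : G} :
    x ∈ cotraj φ U n ↔ ∀ k < n, φ^[k] x ∈ U := by
  simp [cotraj, Set.mem_iInter]

section Top

variable [TopologicalSpace G]

lemma cotraj_mem_nhds [Zero G] {φ : G → G} (hφ : Continuous φ) (h0 : φ 0 = 0) {U : Set G}
    (hU : U ∈ 𝓝 (0 : G)) (n : ℕ) : cotraj φ U n ∈ 𝓝 (0 : G) := by
  refine (Filter.biInter_finset_mem (Finset.range n)).2 fun k _ => ?_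
  have hc : Continuous (φ^[k]) := hφ.iterate k
  have h0k : φ^[k] 0 = 0 := Function.iterate_fixed h0 k
  exact hc.continuousAt.preimage_mem_nhds (by rwa [h0k])

lemma cotraj_isClosed {φ : G → G} (hφ : Continuous φ) {U : Set G} (hU : IsClosed U) (n : ℕ) :
    IsClosed (cotraj φ U n) :=
  isClosed_iInter fun k => isClosed_iInter fun _ => hU.preimage (hφ.iterate k)

lemma cotraj_measurableSet [MeasurableSpace G] [BorelSpace G] {φ : G → G} (hφ : Continuous φ)
    {U : Set G} (hU : IsClosed U) (n : ℕ) : MeasurableSet (cotraj φ U n) :=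
  (cotraj_isClosed hφ hU n).measurableSet

end Top


/-- entropy of `φ` w.r.t. a measure `μ`. -/
noncomputable def ent {G : Type*} [AddGroup G] [TopologicalSpace G] [MeasurableSpace G]
    (μ : Measure G) (φ : G → G) : ℝ≥0∞ :=
  ⨆ U ∈ {U : Set G | IsCompact U ∧ U ∈ 𝓝 (0 : G)},
    Filter.atTop.limsup fun n : ℕ =>
      ENNReal.ofReal ((-Real.log ((μ (cotraj φ U n)).toReal)) / n)

lemma addHtop_eq_ent {G : Type*} [AddCommGroup G] [TopologicalSpace G]
    [h1 : IsTopologicalAddGroup G] [h2 : T2Space G] [h3 : LocallyCompactSpace G] (φ : G → G) :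
    addHtop φ =
      (letI : MeasurableSpace G := borel G
       haveI : BorelSpace G := ⟨rfl⟩
       ent Measure.addHaar φ) := by
  rw [addHtop, dif_pos ⟨h1, h2, h3⟩]
  rfl

lemma addHtop_eq_ent' {G : Type*} [AddCommGroup G] [TopologicalSpace G]
    [IsTopologicalAddGroup G] [T2Space G] [LocallyCompactSpace G]
    [m : MeasurableSpace G] [hb : BorelSpace G] (φ : G → G) :
    addHtop φ = ent Measure.addHaar φ := by
  rw [addHtop_eq_ent]
  have hm : m = borel G := hb.measurable_eq
  subst hm
  rfl

end ATaux

namespace ATaux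

section Core

variable {G : Type*} [AddCommGroup G] [TopologicalSpace G] [IsTopologicalAddGroup G]
  [T2Space G] [LocallyCompactSpace G] [MeasurableSpace G] [BorelSpace G]

lemma entVal_eq (ν μ : Measure G) [μ.IsAddHaarMeasure] [ν.IsAddHaarMeasure]
    {φ : G → G} (hφ : Continuous φ) (h0 : φ 0 = 0) {U : Set G} (hUc : IsCompact U)
    (hU : U ∈ 𝓝 (0 : G)) :
    (atTop.limsup fun n : ℕ => ENNReal.ofReal ((-Real.log ((ν (cotraj φ U n)).toReal)) / n)) =
      atTop.limsup fun n : ℕ => ENNReal.ofReal ((-Real.log ((μ (cotraj φ U n)).toReal)) / n) := by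
  set c : ℝ≥0 := ν.addHaarScalarFactor μ with hc
  have hcpos : 0 < c := Measure.addHaarScalarFactor_pos_of_isAddHaarMeasure ν μ
  have key : ∀ n : ℕ,
      ENNReal.ofReal ((-Real.log ((ν (cotraj φ U n)).toReal)) / n) =
        ENNReal.ofReal ((-Real.log ((μ (cotraj φ U n)).toReal)) / n + (-Real.log c) / n) := by
    intro n
    rcases Nat.eq_zero_or_pos n with rfl | hn
    · simp
    have hsub : cotraj φ U n ⊆ U := cotraj_subset hn
    have hclosed : IsClosed (cotraj φ U n) := cotraj_isClosed hφ hUc.isClosed n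
    have hcompact : IsCompact (closure (cotraj φ U n)) := by
      rw [hclosed.closure_eq]
      exact hUc.of_isClosed_subset hclosed hsub
    have hsmul : ν (cotraj φ U n) = c • μ (cotraj φ U n) :=
      Measure.measure_isAddInvariant_eq_smul_of_isCompact_closure ν μ hcompact
    have hfin : μ (cotraj φ U n) ≠ ⊤ :=
      ((measure_mono hsub).trans_lt hUc.measure_lt_top).ne
    have hpos : 0 < μ (cotraj φ U n) := by
      have hnb := cotraj_mem_nhds hφ h0 hU n
      have h1 : 0 < μ (interior (cotraj φ U n)) :=
        isOpen_interior.measure_pos μ ⟨0, mem_interior_iff_mem_nhds.2 hnb⟩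
      exact h1.trans_le (measure_mono interior_subset)
    have htr : (ν (cotraj φ U n)).toReal = (c : ℝ) * (μ (cotraj φ U n)).toReal := by
      rw [hsmul, ENNReal.smul_def, smul_eq_mul, ENNReal.toReal_mul, ENNReal.coe_toReal]
    have hμne : (μ (cotraj φ U n)).toReal ≠ 0 := (ENNReal.toReal_pos hpos.ne' hfin).ne'
    rw [htr, Real.log_mul (by exact_mod_cast hcpos.ne') hμne]
    congr 1
    field_simp
    ring
  calc (atTop.limsup fun n : ℕ =>
        ENNReal.ofReal ((-Real.log ((ν (cotraj φ U n)).toReal)) / n))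
      = atTop.limsup fun n : ℕ =>
          ENNReal.ofReal ((-Real.log ((μ (cotraj φ U n)).toReal)) / n + (-Real.log c) / n) := by
        exact limsup_congr (Eventually.of_forall key)
    _ = atTop.limsup fun n : ℕ =>
          ENNReal.ofReal ((-Real.log ((μ (cotraj φ U n)).toReal)) / n) := by
        exact limsup_ofReal_add_tendsto _ _ (tendsto_const_div_atTop_nhds_zero_nat _)

lemma ent_eq (ν μ : Measure G) [μ.IsAddHaarMeasure] [ν.IsAddHaarMeasure]
    {φ : G → G} (hφ : Continuous φ) (h0 : φ 0 = 0) : ent ν φ = ent μ φ := by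
  unfold ent
  refine iSup_congr fun U => ?_
  refine iSup_congr fun hU => ?_
  exact entVal_eq ν μ hφ h0 hU.1 hU.2

end Core

section Conj

variable {G G' : Type*}
  [AddCommGroup G] [TopologicalSpace G] [IsTopologicalAddGroup G] [T2Space G]
  [LocallyCompactSpace G]
  [AddCommGroup G'] [TopologicalSpace G'] [IsTopologicalAddGroup G'] [T2Space G']
  [LocallyCompactSpace G']

lemma addHtop_conj (e : G ≃+ G') (he : Continuous e) (he' : Continuous e.symm)
    (φ : G →+ G) (φ' : G' →+ G') (hφ : Continuous φ)
    (hcomm : ∀ x, φ' (e x) = e (φ x)) :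
    addHtop ⇑φ' = addHtop ⇑φ := by
  letI : MeasurableSpace G := borel G
  haveI : BorelSpace G := ⟨rfl⟩
  letI : MeasurableSpace G' := borel G'
  haveI : BorelSpace G' := ⟨rfl⟩
  rw [addHtop_eq_ent' ⇑φ', addHtop_eq_ent' ⇑φ]
  set μ' : Measure G' := Measure.addHaar with hμ'
  set ν : Measure G := μ'.map ⇑e.symm with hν
  haveI : ν.IsAddHaarMeasure := e.symm.isAddHaarMeasure_map μ' he' he
  -- iterates commute
  have hcomm' : ∀ y, φ (e.symm y) = e.symm (φ' y) := by
    intro y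
    have := hcomm (e.symm y)
    rw [e.apply_symm_apply] at this
    rw [this, e.symm_apply_apply]
  have hit : ∀ (k : ℕ) (y : G'), (⇑φ)^[k] (e.symm y) = e.symm ((⇑φ')^[k] y) := by
    intro k
    induction k with
    | zero => intro y; simp
    | succ k ih =>
      intro y
      rw [Function.iterate_succ_apply, Function.iterate_succ_apply, hcomm', ih]
  -- preimage of cotraj
  have hpre : ∀ (U : Set G) (n : ℕ),
      ⇑e.symm ⁻¹' cotraj (⇑φ) U n = cotraj (⇑φ') (⇑e.symm ⁻¹' U) n := by
    intro U n
    ext y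
    simp only [Set.mem_preimage, mem_cotraj]
    constructor
    · intro h k hk
      rw [← hit]
      exact h k hk
    · intro h k hk
      rw [hit]
      exact h k hk
  have hterm : ∀ (U : Set G), IsCompact U → ∀ n : ℕ,
      ν (cotraj (⇑φ) U n) = μ' (cotraj (⇑φ') (⇑e.symm ⁻¹' U) n) := by
    intro U hUc n
    rw [hν, Measure.map_apply he'.measurable (cotraj_measurableSet hφ hUc.isClosed n), hpre]
  -- the set bijection
  have hmemS : ∀ U : Set G, IsCompact U → U ∈ 𝓝 (0 : G) →
      IsCompact (⇑e.symm ⁻¹' U) ∧ ⇑e.symm ⁻¹' U ∈ 𝓝 (0 : G') := by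
    intro U hc hn
    constructor
    · have himg : ⇑e.symm ⁻¹' U = ⇑e '' U := by
        ext y
        simp only [Set.mem_preimage, Set.mem_image]
        constructor
        · intro h; exact ⟨e.symm y, h, e.apply_symm_apply y⟩
        · rintro ⟨x, hx, rfl⟩; rwa [e.symm_apply_apply]
      rw [himg]
      exact hc.image he
    · have h0 : e.symm (0 : G') = 0 := e.symm.map_zero
      exact he'.continuousAt.preimage_mem_nhds (by rwa [h0])
  have hmemS' : ∀ U' : Set G', IsCompact U' → U' ∈ 𝓝 (0 : G') →
      IsCompact (⇑e ⁻¹' U') ∧ ⇑e ⁻¹' U' ∈ 𝓝 (0 : G) := by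
    intro U' hc hn
    constructor
    · have himg : ⇑e ⁻¹' U' = ⇑e.symm '' U' := by
        ext x
        simp only [Set.mem_preimage, Set.mem_image]
        constructor
        · intro h; exact ⟨e x, h, e.symm_apply_apply x⟩
        · rintro ⟨y, hy, rfl⟩; rwa [e.apply_symm_apply]
      rw [himg]
      exact hc.image he'
    · have h0 : e (0 : G) = 0 := e.map_zero
      exact he.continuousAt.preimage_mem_nhds (by rwa [h0])
  -- ent μ' φ' = ent ν φ
  have hents : ent μ' ⇑φ' = ent ν ⇑φ := by
    unfold ent
    apply le_antisymm
    · refine iSup₂_le fun U' hU' => ?_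
      have hU : IsCompact (⇑e ⁻¹' U') ∧ ⇑e ⁻¹' U' ∈ 𝓝 (0 : G) := hmemS' U' hU'.1 hU'.2
      have hUU' : ⇑e.symm ⁻¹' (⇑e ⁻¹' U') = U' := by
        ext y; simp [Set.mem_preimage]
      have heq : (atTop.limsup fun n : ℕ =>
          ENNReal.ofReal ((-Real.log ((μ' (cotraj (⇑φ') U' n)).toReal)) / n)) =
          atTop.limsup fun n : ℕ =>
            ENNReal.ofReal ((-Real.log ((ν (cotraj (⇑φ) (⇑e ⁻¹' U') n)).toReal)) / n) := by
        refine limsup_congr (Eventually.of_forall fun n => ?_)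
        rw [hterm _ hU.1 n, hUU']
      rw [heq]
      exact le_iSup₂ (f := fun U (_ : U ∈ {U : Set G | IsCompact U ∧ U ∈ 𝓝 (0 : G)}) =>
        atTop.limsup fun n : ℕ =>
          ENNReal.ofReal ((-Real.log ((ν (cotraj (⇑φ) U n)).toReal)) / n)) (⇑e ⁻¹' U') hU
    · refine iSup₂_le fun U hU => ?_
      have hU' := hmemS U hU.1 hU.2
      have heq : (atTop.limsup fun n : ℕ =>
          ENNReal.ofReal ((-Real.log ((ν (cotraj (⇑φ) U n)).toReal)) / n)) =
          atTop.limsup fun n : ℕ =>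
            ENNReal.ofReal ((-Real.log ((μ' (cotraj (⇑φ') (⇑e.symm ⁻¹' U) n)).toReal)) / n) := by
        refine limsup_congr (Eventually.of_forall fun n => ?_)
        rw [hterm _ hU.1 n]
      rw [heq]
      exact le_iSup₂ (f := fun U' (_ : U' ∈ {U : Set G' | IsCompact U ∧ U ∈ 𝓝 (0 : G')}) =>
        atTop.limsup fun n : ℕ =>
          ENNReal.ofReal ((-Real.log ((μ' (cotraj (⇑φ') U' n)).toReal)) / n)) (⇑e.symm ⁻¹' U) hU'
  rw [hents]
  exact ent_eq ν Measure.addHaar hφ (map_zero φ)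

end Conj

section ProdZero

lemma ofReal_neg_log_div_mono {x y : ℝ≥0∞} (n : ℕ) (hx : 0 < x) (hxy : x ≤ y) (hy : y ≠ ⊤) :
    ENNReal.ofReal ((-Real.log y.toReal) / n) ≤ ENNReal.ofReal ((-Real.log x.toReal) / n) := by
  rcases Nat.eq_zero_or_pos n with rfl | hn
  · simp
  apply ENNReal.ofReal_le_ofReal
  have hxf : x ≠ ⊤ := (hxy.trans_lt (lt_top_iff_ne_top.2 hy)).ne
  have h1 : 0 < x.toReal := ENNReal.toReal_pos hx.ne' hxf
  have h2 : x.toReal ≤ y.toReal := ENNReal.toReal_mono hy hxy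
  have h4 : -Real.log y.toReal ≤ -Real.log x.toReal := neg_le_neg (Real.log_le_log h1 h2)
  have hn' : (0 : ℝ) < n := by exact_mod_cast hn
  exact (div_le_div_iff_of_pos_right hn').2 h4

variable {A B : Type*}
  [AddCommGroup A] [TopologicalSpace A] [IsTopologicalAddGroup A] [T2Space A]
  [LocallyCompactSpace A]
  [AddCommGroup B] [TopologicalSpace B] [IsTopologicalAddGroup B] [T2Space B]
  [LocallyCompactSpace B]

lemma addHtop_prodMap_zero (ψ : A →+ A) (hψ : Continuous ψ) :
    addHtop ⇑(ψ.prodMap (0 : B →+ B)) = addHtop ⇑ψ := by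
  letI : MeasurableSpace A := borel A
  haveI : BorelSpace A := ⟨rfl⟩
  letI : MeasurableSpace (A × B) := borel (A × B)
  haveI : BorelSpace (A × B) := ⟨rfl⟩
  set Φ : A × B →+ A × B := ψ.prodMap (0 : B →+ B) with hΦ
  have hΦc : Continuous ⇑Φ := by
    rw [hΦ, AddMonoidHom.coe_prodMap]
    exact (hψ.comp continuous_fst).prodMk continuous_const
  have hΦ0 : ⇑Φ 0 = 0 := map_zero Φ
  have happ : ∀ p : A × B, Φ p = (ψ p.1, 0) := fun p => rfl
  -- iterates
  have hiter : ∀ k : ℕ, 1 ≤ k → ∀ p : A × B, (⇑Φ)^[k] p = ((⇑ψ)^[k] p.1, 0) := by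
    intro k hk
    induction k, hk using Nat.le_induction with
    | base => intro p; simp [happ]
    | succ k hk ih =>
      intro p
      rw [Function.iterate_succ_apply, Function.iterate_succ_apply, ih, happ]
  rw [addHtop_eq_ent' ⇑Φ, addHtop_eq_ent' ⇑ψ]
  set μG : Measure (A × B) := Measure.addHaar with hμG
  set μA : Measure A := Measure.addHaar with hμA
  -- rectangle cotraj
  have hrect : ∀ (U₁ : Set A) (U₂ : Set B), (0 : B) ∈ U₂ → ∀ n : ℕ, 1 ≤ n →
      cotraj (⇑Φ) (U₁ ×ˢ U₂) n = (cotraj (⇑ψ) U₁ n) ×ˢ U₂ := by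
    intro U₁ U₂ h02 n hn
    ext p
    simp only [mem_cotraj, Set.mem_prod]
    constructor
    · intro h
      refine ⟨fun k hk => ?_, ?_⟩
      · rcases Nat.eq_zero_or_pos k with rfl | hk1
        · simpa using (h 0 (lt_of_lt_of_le Nat.zero_lt_one hn)).1
        · have := (h k hk).1
          rwa [hiter k hk1 p] at this
      · simpa using (h 0 (lt_of_lt_of_le Nat.zero_lt_one hn)).2
    · rintro ⟨h1, h2⟩ k hk
      rcases Nat.eq_zero_or_pos k with rfl | hk1
      · exact ⟨by simpa using h1 0 (lt_of_lt_of_le Nat.zero_lt_one hn), by simpa using h2⟩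
      · rw [hiter k hk1 p]
        exact ⟨h1 k hk, h02⟩
  -- main rectangle value computation
  have hmain : ∀ (U₁ : Set A), IsCompact U₁ → U₁ ∈ 𝓝 (0 : A) →
      ∀ (U₂ : Set B), IsCompact U₂ → U₂ ∈ 𝓝 (0 : B) →
      (atTop.limsup fun n : ℕ =>
          ENNReal.ofReal ((-Real.log ((μG (cotraj (⇑Φ) (U₁ ×ˢ U₂) n)).toReal)) / n)) =
        atTop.limsup fun n : ℕ =>
          ENNReal.ofReal ((-Real.log ((μA (cotraj (⇑ψ) U₁ n)).toReal)) / n) := by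
    intro U₁ hU₁c hU₁n U₂ hU₂c hU₂n
    set ν : Measure A := (μG.restrict (Set.univ ×ˢ U₂)).map Prod.fst with hνdef
    have hν : ∀ s : Set A, MeasurableSet s → ν s = μG (s ×ˢ U₂) := by
      intro s hs
      rw [hνdef, Measure.map_apply continuous_fst.measurable hs,
        Measure.restrict_apply (continuous_fst.measurable hs)]
      congr 1
      ext ⟨a, b⟩
      simp [Set.mem_prod, and_comm]
    haveI hfc : IsFiniteMeasureOnCompacts ν := by
      constructor
      intro K hK
      rw [hν K hK.measurableSet]
      exact (hK.prod hU₂c).measure_lt_top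
    haveI hli : ν.IsAddLeftInvariant := by
      constructor
      intro a
      ext s hs
      rw [Measure.map_apply (continuous_add_left a).measurable hs,
        hν _ (hs.preimage (continuous_add_left a).measurable), hν s hs]
      have hset : ((a + ·) ⁻¹' s) ×ˢ U₂ = (((a, (0 : B)) + ·) ⁻¹' (s ×ˢ U₂)) := by
        ext ⟨x, y⟩
        simp [Set.mem_prod, Prod.ext_iff]
      rw [hset, measure_preimage_add]
    haveI hop : ν.IsOpenPosMeasure := by
      constructor
      intro o ho hne h0
      have hmono : μG (o ×ˢ interior U₂) = 0 :=
        measure_mono_null (Set.prod_mono_right interior_subset) (by rwa [hν o ho.measurableSet] at h0)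
      exact (ho.prod isOpen_interior).measure_ne_zero μG
        ⟨(hne.choose, 0), hne.choose_spec, mem_interior_iff_mem_nhds.2 hU₂n⟩ hmono
    haveI hνh : ν.IsAddHaarMeasure := ⟨⟩
    have h02 : (0 : B) ∈ U₂ := mem_of_mem_nhds hU₂n
    have heq1 : (atTop.limsup fun n : ℕ =>
        ENNReal.ofReal ((-Real.log ((μG (cotraj (⇑Φ) (U₁ ×ˢ U₂) n)).toReal)) / n)) =
        atTop.limsup fun n : ℕ =>
          ENNReal.ofReal ((-Real.log ((ν (cotraj (⇑ψ) U₁ n)).toReal)) / n) := by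
      refine limsup_congr ?_
      filter_upwards [eventually_ge_atTop 1] with n hn
      rw [hrect U₁ U₂ h02 n hn, hν _ (cotraj_measurableSet hψ hU₁c.isClosed n)]
    rw [heq1]
    exact entVal_eq ν μA hψ (map_zero ψ) hU₁c hU₁n
  -- assemble suprema
  unfold ent
  apply le_antisymm
  · refine iSup₂_le fun W hW => ?_
    obtain ⟨V₁, hV₁, V₂, hV₂, hVsub⟩ := mem_nhds_prod_iff.1 hW.2
    obtain ⟨U₁, hU₁n, hU₁sub, hU₁c⟩ := LocallyCompactSpace.local_compact_nhds (0 : A) V₁ hV₁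
    obtain ⟨U₂, hU₂n, hU₂sub, hU₂c⟩ := LocallyCompactSpace.local_compact_nhds (0 : B) V₂ hV₂
    have hUsub : U₁ ×ˢ U₂ ⊆ W := (Set.prod_mono hU₁sub hU₂sub).trans hVsub
    have hanti : (atTop.limsup fun n : ℕ =>
        ENNReal.ofReal ((-Real.log ((μG (cotraj (⇑Φ) W n)).toReal)) / n)) ≤
        atTop.limsup fun n : ℕ =>
          ENNReal.ofReal ((-Real.log ((μG (cotraj (⇑Φ) (U₁ ×ˢ U₂) n)).toReal)) / n) := by
      refine limsup_le_limsup ?_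
      filter_upwards [eventually_ge_atTop 1] with n hn
      have hpos : 0 < μG (cotraj (⇑Φ) (U₁ ×ˢ U₂) n) := by
        have hnb := cotraj_mem_nhds hΦc hΦ0 (prod_mem_nhds hU₁n hU₂n) n
        have h1 : 0 < μG (interior (cotraj (⇑Φ) (U₁ ×ˢ U₂) n)) :=
          isOpen_interior.measure_pos μG ⟨0, mem_interior_iff_mem_nhds.2 hnb⟩
        exact h1.trans_le (measure_mono interior_subset)
      have hfin : μG (cotraj (⇑Φ) W n) ≠ ⊤ :=
        ((measure_mono (cotraj_subset hn)).trans_lt hW.1.measure_lt_top).ne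
      exact ofReal_neg_log_div_mono n hpos
        (measure_mono (cotraj_mono hUsub n)) hfin
    refine hanti.trans ?_
    rw [hmain U₁ hU₁c hU₁n U₂ hU₂c hU₂n]
    exact le_iSup₂ (f := fun U (_ : U ∈ {U : Set A | IsCompact U ∧ U ∈ 𝓝 (0 : A)}) =>
      atTop.limsup fun n : ℕ =>
        ENNReal.ofReal ((-Real.log ((μA (cotraj (⇑ψ) U n)).toReal)) / n)) U₁ ⟨hU₁c, hU₁n⟩
  · refine iSup₂_le fun U₁ hU₁ => ?_
    obtain ⟨U₂, hU₂c, hU₂n⟩ := exists_compact_mem_nhds (0 : B)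
    rw [← hmain U₁ hU₁.1 hU₁.2 U₂ hU₂c hU₂n]
    exact le_iSup₂ (f := fun U (_ : U ∈ {U : Set (A × B) | IsCompact U ∧ U ∈ 𝓝 (0 : A × B)}) =>
      atTop.limsup fun n : ℕ =>
        ENNReal.ofReal ((-Real.log ((μG (cotraj (⇑Φ) U n)).toReal)) / n))
      (U₁ ×ˢ U₂) ⟨hU₁.1.prod hU₂c, prod_mem_nhds hU₁.2 hU₂n⟩

end ProdZero



end ATaux

namespace ATaux

section QuotCont

variable {G M : Type*} [AddCommGroup G] [TopologicalSpace G] [AddCommGroup M]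
  [TopologicalSpace M]

lemma continuous_qlift (N : AddSubgroup G) (f : G →+ M) (h : N ≤ f.ker) (hf : Continuous f) :
    Continuous ⇑(QuotientAddGroup.lift N f h) := by
  refine (QuotientAddGroup.isQuotientMap_mk N).continuous_iff.mpr ?_
  have heq : (⇑(QuotientAddGroup.lift N f h) ∘ (QuotientAddGroup.mk : G → G ⧸ N)) = ⇑f :=
    funext fun x => rfl
  rw [heq]
  exact hf

lemma continuous_quotHom (φ : G →+ G) (hφ : Continuous φ) (H : AddSubgroup G)
    (h : H ≤ H.comap φ) : Continuous ⇑(quotHom φ H) := by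
  rw [quotHom, dif_pos h]
  refine (QuotientAddGroup.isQuotientMap_mk H).continuous_iff.mpr ?_
  have heq : (⇑(QuotientAddGroup.map H H φ h) ∘ (QuotientAddGroup.mk : G → G ⧸ H)) =
      fun x => (QuotientAddGroup.mk (φ x) : G ⧸ H) :=
    funext fun x => rfl
  rw [heq]
  exact QuotientAddGroup.continuous_mk.comp hφ

lemma continuous_subHom (φ : G →+ G) (hφ : Continuous φ) (H : AddSubgroup G) :
    Continuous ⇑(subHom φ H) := by
  by_cases h : H ≤ H.comap φ
  · rw [subHom, dif_pos h]
    exact (hφ.comp continuous_subtype_val).subtype_mk _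
  · rw [subHom, dif_neg h]
    exact continuous_const

end QuotCont

section SubProd

variable {A B : Type*}
  [AddCommGroup A] [TopologicalSpace A] [IsTopologicalAddGroup A] [T2Space A]
  [LocallyCompactSpace A]
  [AddCommGroup B] [TopologicalSpace B] [IsTopologicalAddGroup B] [T2Space B]
  [LocallyCompactSpace B]

lemma prod_bot_isClosed (H : AddSubgroup A) (hHc : IsClosed (H : Set A)) :
    IsClosed ((H.prod (⊥ : AddSubgroup B) : AddSubgroup (A × B)) : Set (A × B)) := by
  have : ((H.prod (⊥ : AddSubgroup B) : AddSubgroup (A × B)) : Set (A × B)) =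
      (H : Set A) ×ˢ ({0} : Set B) := by
    ext ⟨a, b⟩
    simp only [SetLike.mem_coe, AddSubgroup.mem_prod, Set.mem_prod, AddSubgroup.mem_bot,
      Set.mem_singleton_iff]
  rw [this]
  exact hHc.prod isClosed_singleton

omit [TopologicalSpace A] [IsTopologicalAddGroup A] [T2Space A] [LocallyCompactSpace A] [TopologicalSpace B] [IsTopologicalAddGroup B] [T2Space B] [LocallyCompactSpace B] in
lemma prod_bot_inv (ψ : A →+ A) (H : AddSubgroup A) (hinv : H ≤ H.comap ψ) :
    H.prod (⊥ : AddSubgroup B) ≤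
      (H.prod (⊥ : AddSubgroup B)).comap (ψ.prodMap (0 : B →+ B)) := by
  rintro ⟨a, b⟩ hab
  obtain ⟨ha, hb⟩ := AddSubgroup.mem_prod.1 hab
  rw [AddSubgroup.mem_comap]
  exact AddSubgroup.mem_prod.2 ⟨hinv ha, AddSubgroup.zero_mem _⟩

lemma addHtop_subHom_prod (ψ : A →+ A) (hψ : Continuous ψ) (H : AddSubgroup A)
    (hHc : IsClosed (H : Set A)) (hinv : H ≤ H.comap ψ) :
    addHtop ⇑(subHom (ψ.prodMap (0 : B →+ B)) (H.prod ⊥)) = addHtop ⇑(subHom ψ H) := by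
  set K : AddSubgroup (A × B) := H.prod ⊥ with hK
  have hKc : IsClosed (K : Set (A × B)) := prod_bot_isClosed H hHc
  have hKinv : K ≤ K.comap (ψ.prodMap (0 : B →+ B)) := prod_bot_inv ψ H hinv
  haveI : LocallyCompactSpace ↥K := hKc.locallyCompactSpace
  haveI : LocallyCompactSpace ↥H := hHc.locallyCompactSpace
  have memK : ∀ p : A × B, p ∈ K ↔ p.1 ∈ H ∧ p.2 = 0 := by
    intro p
    rw [hK]
    rcases p with ⟨a, b⟩
    simp [AddSubgroup.mem_prod, AddSubgroup.mem_bot]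
  set e : ↥K ≃+ ↥H :=
    { toFun := fun k => ⟨k.1.1, ((memK k.1).1 k.2).1⟩
      invFun := fun h => ⟨(h.1, 0), (memK _).2 ⟨h.2, rfl⟩⟩
      left_inv := fun k => by
        apply Subtype.ext
        apply Prod.ext
        · rfl
        · exact (((memK k.1).1 k.2).2).symm
      right_inv := fun h => rfl
      map_add' := fun x y => by
        apply Subtype.ext
        rfl } with he_def
  have he : Continuous ⇑e := (continuous_fst.comp continuous_subtype_val).subtype_mk _
  have he' : Continuous ⇑e.symm :=
    (continuous_subtype_val.prodMk continuous_const).subtype_mk _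
  refine (addHtop_conj e he he' (subHom (ψ.prodMap (0 : B →+ B)) K) (subHom ψ H)
    (continuous_subHom _ ((hψ.comp continuous_fst).prodMk continuous_const) K) ?_).symm
  intro k
  apply Subtype.ext
  show (subHom ψ H ⟨k.1.1, _⟩ : A) = _
  rw [subHom, dif_pos hinv, subHom, dif_pos hKinv]
  rfl

end SubProd

end ATaux

namespace ATaux

section QuotProd

variable {A B : Type*}
  [AddCommGroup A] [TopologicalSpace A] [IsTopologicalAddGroup A] [T2Space A]
  [LocallyCompactSpace A]
  [AddCommGroup B] [TopologicalSpace B] [IsTopologicalAddGroup B] [T2Space B]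
  [LocallyCompactSpace B]

lemma addHtop_quotHom_prod (ψ : A →+ A) (hψ : Continuous ψ) (H : AddSubgroup A)
    (hHc : IsClosed (H : Set A)) (hinv : H ≤ H.comap ψ) :
    addHtop ⇑(quotHom (ψ.prodMap (0 : B →+ B)) (H.prod ⊥)) = addHtop ⇑(quotHom ψ H) := by
  set K : AddSubgroup (A × B) := H.prod ⊥ with hK
  have hKc : IsClosed (K : Set (A × B)) := prod_bot_isClosed H hHc
  have hKinv : K ≤ K.comap (ψ.prodMap (0 : B →+ B)) := prod_bot_inv ψ H hinv
  haveI : IsClosed (K : Set (A × B)) := hKc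
  haveI : IsClosed (H : Set A) := hHc
  -- the homomorphism (A × B) ⧸ K →+ (A ⧸ H) × B
  have hfker : K ≤ ((QuotientAddGroup.mk' H).prodMap (AddMonoidHom.id B)).ker := by
    rintro ⟨a, b⟩ hab
    obtain ⟨ha, hb⟩ := AddSubgroup.mem_prod.1 hab
    rw [AddMonoidHom.mem_ker]
    have hb0 : b = 0 := AddSubgroup.mem_bot.1 hb
    apply Prod.ext
    · exact (QuotientAddGroup.eq_zero_iff a).2 ha
    · exact hb0
  set ebar : (A × B) ⧸ K →+ (A ⧸ H) × B :=
    QuotientAddGroup.lift K ((QuotientAddGroup.mk' H).prodMap (AddMonoidHom.id B)) hfker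
    with hebar
  have hebar_mk : ∀ (a : A) (b : B),
      ebar (QuotientAddGroup.mk (a, b)) = ((a : A ⧸ H), b) := fun a b => rfl
  -- the inverse homomorphism pieces
  have h1ker : H ≤ ((QuotientAddGroup.mk' K).comp (AddMonoidHom.inl A B)).ker := by
    intro a ha
    rw [AddMonoidHom.mem_ker]
    exact (QuotientAddGroup.eq_zero_iff _).2 (AddSubgroup.mem_prod.2 ⟨ha, AddSubgroup.zero_mem _⟩)
  set g₁ : A ⧸ H →+ (A × B) ⧸ K :=
    QuotientAddGroup.lift H ((QuotientAddGroup.mk' K).comp (AddMonoidHom.inl A B)) h1ker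
    with hg₁def
  set g₂ : B →+ (A × B) ⧸ K := (QuotientAddGroup.mk' K).comp (AddMonoidHom.inr A B) with hg₂def
  have hg : ∀ (a : A) (b : B),
      g₁ (a : A ⧸ H) + g₂ b = (QuotientAddGroup.mk (a, b) : (A × B) ⧸ K) := by
    intro a b
    have h1 : g₁ (a : A ⧸ H) = (QuotientAddGroup.mk ((a, 0) : A × B) : (A × B) ⧸ K) := rfl
    have h2 : g₂ b = (QuotientAddGroup.mk ((0, b) : A × B) : (A × B) ⧸ K) := rfl
    rw [h1, h2, ← QuotientAddGroup.mk_add]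
    norm_num
  set e : ((A × B) ⧸ K) ≃+ (A ⧸ H) × B :=
    { toFun := ⇑ebar
      invFun := fun p => g₁ p.1 + g₂ p.2
      left_inv := by
        intro q
        refine QuotientAddGroup.induction_on q ?_
        rintro ⟨a, b⟩
        rw [hebar_mk a b]
        exact hg a b
      right_inv := by
        rintro ⟨x, b⟩
        refine QuotientAddGroup.induction_on x ?_
        intro a
        show ebar (g₁ (a : A ⧸ H) + g₂ b) = _
        rw [hg a b, hebar_mk a b]
      map_add' := ebar.map_add } with he_def
  have he : Continuous ⇑e := by
    show Continuous ⇑ebar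
    refine continuous_qlift _ _ _ ?_
    rw [AddMonoidHom.coe_prodMap]
    exact (QuotientAddGroup.continuous_mk.comp continuous_fst).prodMk continuous_snd
  have hg₁c : Continuous ⇑g₁ := by
    refine continuous_qlift _ _ _ ?_
    show Continuous fun a : A => (QuotientAddGroup.mk ((a, 0) : A × B) : (A × B) ⧸ K)
    exact QuotientAddGroup.continuous_mk.comp (continuous_id.prodMk continuous_const)
  have hg₂c : Continuous ⇑g₂ := by
    show Continuous fun b : B => (QuotientAddGroup.mk ((0, b) : A × B) : (A × B) ⧸ K)
    exact QuotientAddGroup.continuous_mk.comp (continuous_const.prodMk continuous_id)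
  have he' : Continuous ⇑e.symm := by
    show Continuous fun p : (A ⧸ H) × B => g₁ p.1 + g₂ p.2
    exact (hg₁c.comp continuous_fst).add (hg₂c.comp continuous_snd)
  have hcomm : ∀ q : (A × B) ⧸ K,
      ((quotHom ψ H).prodMap (0 : B →+ B)) (e q) = e (quotHom (ψ.prodMap (0 : B →+ B)) K q) := by
    intro q
    refine QuotientAddGroup.induction_on q ?_
    rintro ⟨a, b⟩
    have hR : quotHom (ψ.prodMap (0 : B →+ B)) K (QuotientAddGroup.mk (a, b)) =
        (QuotientAddGroup.mk ((ψ.prodMap (0 : B →+ B)) (a, b)) : (A × B) ⧸ K) := by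
      rw [quotHom, dif_pos hKinv]
      rfl
    have hL : quotHom ψ H (a : A ⧸ H) = ((ψ a : A) : A ⧸ H) := by
      rw [quotHom, dif_pos hinv]
      rfl
    show ((quotHom ψ H).prodMap (0 : B →+ B)) (ebar (QuotientAddGroup.mk (a, b))) = _
    rw [hebar_mk a b, hR]
    have : ((ψ.prodMap (0 : B →+ B)) (a, b)) = (ψ a, (0 : B)) := rfl
    rw [this]
    show ((quotHom ψ H) (a : A ⧸ H), (0 : B →+ B) b) = ebar (QuotientAddGroup.mk (ψ a, 0))
    rw [hL, hebar_mk (ψ a) 0]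
    rfl
  have hmaincont : Continuous ⇑(quotHom (ψ.prodMap (0 : B →+ B)) K) :=
    continuous_quotHom _ ((hψ.comp continuous_fst).prodMk continuous_const) K hKinv
  have h2 := addHtop_conj e he he' (quotHom (ψ.prodMap (0 : B →+ B)) K)
    ((quotHom ψ H).prodMap (0 : B →+ B)) hmaincont hcomm
  have h1 : addHtop ⇑((quotHom ψ H).prodMap (0 : B →+ B)) = addHtop ⇑(quotHom ψ H) :=
    addHtop_prodMap_zero (quotHom ψ H) (continuous_quotHom ψ hψ H hinv)
  rw [← h2, h1]

end QuotProd

end ATaux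

namespace ATaux

section ATlemmas

variable {A B : Type*}
  [AddCommGroup A] [TopologicalSpace A] [IsTopologicalAddGroup A] [T2Space A]
  [LocallyCompactSpace A]
  [AddCommGroup B] [TopologicalSpace B] [IsTopologicalAddGroup B] [T2Space B]
  [LocallyCompactSpace B]

lemma AT_left (h : AT (A × B)) : AT A := by
  intro ψ hψ H hHc hinv
  have key := h (ψ.prodMap (0 : B →+ B)) ((hψ.comp continuous_fst).prodMk continuous_const)
    (H.prod ⊥) (prod_bot_isClosed H hHc) (prod_bot_inv ψ H hinv)
  rw [addHtop_prodMap_zero ψ hψ, addHtop_subHom_prod ψ hψ H hHc hinv,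
    addHtop_quotHom_prod ψ hψ H hHc hinv] at key
  exact key

lemma AT_congr (e : A ≃+ B) (he : Continuous e) (he' : Continuous e.symm) (h : AT A) : AT B := by
  intro φ' hφ' H' hH'c hH'inv
  set φ : A →+ A := (e.symm.toAddMonoidHom.comp φ').comp e.toAddMonoidHom with hφdef
  have hφapp : ∀ x : A, φ x = e.symm (φ' (e x)) := fun x => rfl
  have hφ : Continuous ⇑φ := he'.comp (hφ'.comp he)
  set H : AddSubgroup A := H'.comap e.toAddMonoidHom with hHdef
  have hHc : IsClosed (H : Set A) := hH'c.preimage he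
  have hmem : ∀ x : A, x ∈ H ↔ e x ∈ H' := fun x => Iff.rfl
  have hinv : H ≤ H.comap φ := by
    intro x hx
    rw [AddSubgroup.mem_comap]
    rw [hmem, hφapp, e.apply_symm_apply]
    exact hH'inv (hmem x |>.1 hx)
  have hcomm0 : ∀ x : A, φ' (e x) = e (φ x) := by
    intro x
    rw [hφapp, e.apply_symm_apply]
  have key := h φ hφ H hHc hinv
  -- main terms
  have h1 : addHtop ⇑φ' = addHtop ⇑φ := addHtop_conj e he he' φ φ' hφ hcomm0
  -- subgroup terms
  haveI : LocallyCompactSpace ↥H := hHc.locallyCompactSpace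
  haveI : LocallyCompactSpace ↥H' := hH'c.locallyCompactSpace
  set eH : ↥H ≃+ ↥H' :=
    { toFun := fun x => ⟨e x.1, (hmem x.1).1 x.2⟩
      invFun := fun y => ⟨e.symm y.1, by
        rw [hmem, e.apply_symm_apply]
        exact y.2⟩
      left_inv := fun x => by
        apply Subtype.ext
        exact e.symm_apply_apply x.1
      right_inv := fun y => by
        apply Subtype.ext
        exact e.apply_symm_apply y.1
      map_add' := fun x y => by
        apply Subtype.ext
        exact map_add e x.1 y.1 } with heH
  have heHc : Continuous ⇑eH := ((he.comp continuous_subtype_val).subtype_mk _)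
  have heHc' : Continuous ⇑eH.symm := ((he'.comp continuous_subtype_val).subtype_mk _)
  have h2 : addHtop ⇑(subHom φ' H') = addHtop ⇑(subHom φ H) := by
    refine addHtop_conj eH heHc heHc' (subHom φ H) (subHom φ' H')
      (continuous_subHom φ hφ H) ?_
    intro x
    apply Subtype.ext
    show (subHom φ' H' ⟨e x.1, _⟩ : B) = e ((subHom φ H x : A))
    rw [subHom, dif_pos hH'inv, subHom, dif_pos hinv]
    exact hcomm0 x.1
  -- quotient terms
  haveI : IsClosed (H : Set A) := hHc
  haveI : IsClosed (H' : Set B) := hH'c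
  have hker1 : H ≤ ((QuotientAddGroup.mk' H').comp e.toAddMonoidHom).ker := by
    intro x hx
    rw [AddMonoidHom.mem_ker]
    exact (QuotientAddGroup.eq_zero_iff _).2 ((hmem x).1 hx)
  have hker2 : H' ≤ ((QuotientAddGroup.mk' H).comp e.symm.toAddMonoidHom).ker := by
    intro y hy
    rw [AddMonoidHom.mem_ker]
    refine (QuotientAddGroup.eq_zero_iff _).2 ?_
    show e (e.symm y) ∈ H'
    rw [e.apply_symm_apply]
    exact hy
  set ebar : A ⧸ H →+ B ⧸ H' :=
    QuotientAddGroup.lift H ((QuotientAddGroup.mk' H').comp e.toAddMonoidHom) hker1 with hebar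
  set gbar : B ⧸ H' →+ A ⧸ H :=
    QuotientAddGroup.lift H' ((QuotientAddGroup.mk' H).comp e.symm.toAddMonoidHom) hker2
    with hgbar
  set eQ : (A ⧸ H) ≃+ (B ⧸ H') :=
    { toFun := ⇑ebar
      invFun := ⇑gbar
      left_inv := by
        intro q
        refine QuotientAddGroup.induction_on q ?_
        intro x
        show gbar ((e x : B) : B ⧸ H') = _
        show ((e.symm (e x) : A) : A ⧸ H) = _
        rw [e.symm_apply_apply]
      right_inv := by
        intro q
        refine QuotientAddGroup.induction_on q ?_
        intro y
        show ebar ((e.symm y : A) : A ⧸ H) = _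
        show ((e (e.symm y) : B) : B ⧸ H') = _
        rw [e.apply_symm_apply]
      map_add' := ebar.map_add } with heQ
  have heQc : Continuous ⇑eQ := by
    show Continuous ⇑ebar
    exact continuous_qlift _ _ _ (QuotientAddGroup.continuous_mk.comp he)
  have heQc' : Continuous ⇑eQ.symm := by
    show Continuous ⇑gbar
    exact continuous_qlift _ _ _ (QuotientAddGroup.continuous_mk.comp he')
  have h3 : addHtop ⇑(quotHom φ' H') = addHtop ⇑(quotHom φ H) := by
    refine addHtop_conj eQ heQc heQc' (quotHom φ H) (quotHom φ' H')
      (continuous_quotHom φ hφ H hinv) ?_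
    intro q
    refine QuotientAddGroup.induction_on q ?_
    intro x
    have hR : quotHom φ H ((x : A) : A ⧸ H) = ((φ x : A) : A ⧸ H) := by
      rw [quotHom, dif_pos hinv]; rfl
    have hL : quotHom φ' H' ((e x : B) : B ⧸ H') = ((φ' (e x) : B) : B ⧸ H') := by
      rw [quotHom, dif_pos hH'inv]; rfl
    show quotHom φ' H' (ebar ((x : A) : A ⧸ H)) = ebar (quotHom φ H ((x : A) : A ⧸ H))
    have hbm : ∀ z : A, ebar ((z : A) : A ⧸ H) = ((e z : B) : B ⧸ H') := fun z => rfl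
    rw [hbm, hL, hR, hbm, hcomm0]
  rw [h1, h2, h3]
  exact key

end ATlemmas

end ATaux

/-- Let `G = G₁ × G₂` be a locally compact abelian group where each of
`G₁`, `G₂` is either compact, or totally disconnected, or topologically isomorphic to
`ℝ^n`. If `AT(G)` holds, then `AT(G₁)` and `AT(G₂)` hold. -/
theorem AT_factors_of_AT_prod
    (G₁ G₂ : Type*)
    [AddCommGroup G₁] [TopologicalSpace G₁] [IsTopologicalAddGroup G₁]
    [T2Space G₁] [LocallyCompactSpace G₁]
    [AddCommGroup G₂] [TopologicalSpace G₂] [IsTopologicalAddGroup G₂]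
    [T2Space G₂] [LocallyCompactSpace G₂]
    (h₁ : CompactSpace G₁ ∨ TotallyDisconnectedSpace G₁ ∨
      ∃ n : ℕ, ∃ e : G₁ ≃+ (Fin n → ℝ), Continuous e ∧ Continuous e.symm)
    (h₂ : CompactSpace G₂ ∨ TotallyDisconnectedSpace G₂ ∨
      ∃ n : ℕ, ∃ e : G₂ ≃+ (Fin n → ℝ), Continuous e ∧ Continuous e.symm)
    (hAT : AT (G₁ × G₂)) :
    AT G₁ ∧ AT G₂ := by
  constructor
  · exact ATaux.AT_left hAT
  · have hswap : AT (G₂ × G₁) :=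
      ATaux.AT_congr (AddEquiv.prodComm : (G₁ × G₂) ≃+ (G₂ × G₁))
        continuous_swap continuous_swap hAT
    exact ATaux.AT_left hswap
end
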